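/- arXiv:1209.6589 — 7 statements merged into one kernel-verified Lean document; each statement's English description precedes it below -/
import Mathlib

section
/- Suppose the linear equation x_{m+1} = A_m x_m admits a general dichotomy with bounds (a_{m,n}) and (b_{m,n}), the maps f_m are Lipschitz with f_m(0)=0, α < +∞, and 2α + max{2β, √β} < 1. Then for each φ ∈ 𝒳 and each n ∈ ℕ there exists a unique sequence x^φ = (x^φ_m)_{m≥n} ∈ ℬ_n satisfying x^φ_m(ξ) = 𝒜_{m,n}ξ + Σ_{k=n}^{m−1} 𝒜_{m,k+1} P_{k+1} f_k(x^φ_k(ξ) + φ_k(x^φ_k(ξ))) for all m ≥ n and all ξ ∈ E_n; in particular x^φ_n(ξ) = ξ for every ξ ∈ E_n. -/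
/-- `calA A m n` is the linear evolution operator
`𝒜_{m,n} = A_{m-1} ∘ ⋯ ∘ A_n` (and the identity if `m ≤ n`). -/
def calA {X : Type*} [NormedAddCommGroup X] [NormedSpace ℝ X]
    (A : ℕ → X →L[ℝ] X) : ℕ → ℕ → X →L[ℝ] X
  | 0, _ => ContinuousLinearMap.id ℝ X
  | m + 1, n => if m + 1 ≤ n then ContinuousLinearMap.id ℝ X else (A m).comp (calA A m n)

lemma calA_self {X : Type*} [NormedAddCommGroup X] [NormedSpace ℝ X]
    (A : ℕ → X →L[ℝ] X) (n : ℕ) : calA A n n = ContinuousLinearMap.id ℝ X := by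
  cases n with
  | zero => rfl
  | succ m => simp [calA]

/-- The canonical solution sequence, defined by recursion on `m`. -/
noncomputable def xAux {X : Type*} [NormedAddCommGroup X] [NormedSpace ℝ X]
    (A P : ℕ → X →L[ℝ] X) (f : ℕ → X → X)
    (φ : ∀ n : ℕ, LinearMap.range (P n : X →ₗ[ℝ] X) → LinearMap.ker (P n : X →ₗ[ℝ] X)) (n : ℕ) :
    ℕ → X → X
  | m => fun ξ =>
      calA A m n ξ +
        ∑ k ∈ (Finset.Ico n m).attach,
          calA A m (k.1 + 1) (P (k.1 + 1) (f k.1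
            (xAux A P f φ n k.1 ξ +
              (φ k.1 ⟨P k.1 (xAux A P f φ n k.1 ξ),
                LinearMap.mem_range.mpr ⟨xAux A P f φ n k.1 ξ, rfl⟩⟩ : X))))
  termination_by m => m
  decreasing_by exact (Finset.mem_Ico.mp k.2).2

lemma xAux_eq {X : Type*} [NormedAddCommGroup X] [NormedSpace ℝ X]
    (A P : ℕ → X →L[ℝ] X) (f : ℕ → X → X)
    (φ : ∀ n : ℕ, LinearMap.range (P n : X →ₗ[ℝ] X) → LinearMap.ker (P n : X →ₗ[ℝ] X)) (n m : ℕ) (ξ : X) :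
    xAux A P f φ n m ξ =
      calA A m n ξ +
        ∑ k ∈ Finset.Ico n m,
          calA A m (k + 1) (P (k + 1) (f k
            (xAux A P f φ n k ξ +
              (φ k ⟨P k (xAux A P f φ n k ξ),
                LinearMap.mem_range.mpr ⟨xAux A P f φ n k ξ, rfl⟩⟩ : X)))) := by
  rw [xAux]
  beta_reduce
  exact congrArg (calA A m n ξ + ·)
    (Finset.sum_attach (Finset.Ico n m) (fun k =>
      calA A m (k + 1) (P (k + 1) (f k
        (xAux A P f φ n k ξ +
          (φ k ⟨P k (xAux A P f φ n k ξ),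
            LinearMap.mem_range.mpr ⟨xAux A P f φ n k ξ, rfl⟩⟩ : X))))))

/-- Lemma 3.1, existence and uniqueness of `x^φ ∈ ℬ_n`. -/
theorem exists_unique_xphi
    {X : Type*} [NormedAddCommGroup X] [NormedSpace ℝ X] [CompleteSpace X]
    (A P : ℕ → X →L[ℝ] X) (B : ℕ → ℕ → X →L[ℝ] X) (a b : ℕ → ℕ → ℝ)
    -- the bounds are positive
    (ha : ∀ m n : ℕ, n ≤ m → 0 < a m n) (hb : ∀ m n : ℕ, n ≤ m → 0 < b m n)
    -- the `P n` are bounded projections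
    (hproj : ∀ n, (P n).comp (P n) = P n)
    -- (S1) : `P m ∘ 𝒜_{m,n} = 𝒜_{m,n} ∘ P n`
    (hS1 : ∀ m n : ℕ, n ≤ m → (P m).comp (calA A m n) = (calA A m n).comp (P n))
    -- (S2)/(S3) : `B m n` is the operator `(𝒜_{m,n}|_{F n})⁻¹ ∘ Q m`, where `Q m = Id - P m`;
    -- its existence encodes that `𝒜_{m,n}` maps `F n = ker (P n)` bijectively onto `F m`
    (hB1 : ∀ m n : ℕ, n ≤ m → ∀ x : X, calA A m n (B m n x) = x - P m x)
    (hB2 : ∀ m n : ℕ, n ≤ m → ∀ x : X, B m n (calA A m n x) = x - P n x)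
    (hBF : ∀ m n : ℕ, n ≤ m → ∀ x : X, P n (B m n x) = 0)
    -- (D1) : `‖𝒜_{m,n} P n‖ ≤ a m n`
    (hD1 : ∀ m n : ℕ, n ≤ m → ‖(calA A m n).comp (P n)‖ ≤ a m n)
    -- (D2) : `‖(𝒜_{m,n}|_{F n})⁻¹ Q m‖ ≤ b m n`
    (hD2 : ∀ m n : ℕ, n ≤ m → ‖B m n‖ ≤ b m n)
    -- the perturbations `f k` vanish at `0` and are Lipschitz with constant `L k`
    (f : ℕ → X → X) (L : ℕ → ℝ) (hL0 : ∀ k, 0 ≤ L k) (hf0 : ∀ k, f k 0 = 0)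
    (hLip : ∀ (k : ℕ) (u v : X), ‖f k u - f k v‖ ≤ L k * ‖u - v‖)
    -- `α = sup_{m>n} (1/a_{m,n}) ∑_{k=n}^{m-1} a_{m,k+1} a_{k,n} Lip(f k) < ∞`
    (α : ℝ)
    (hα : IsLUB {r : ℝ | ∃ m n : ℕ, n < m ∧
      r = (∑ k ∈ Finset.Ico n m, a m (k + 1) * (a k n * L k)) / a m n} α)
    -- `β = sup_n ∑_{k=n}^{∞} b_{k+1,n} a_{k,n} Lip(f k) < ∞`
    (β : ℝ)
    (hsum : ∀ n : ℕ, Summable fun j : ℕ => b (n + j + 1) n * (a (n + j) n * L (n + j)))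
    (hβ : IsLUB {r : ℝ | ∃ n : ℕ,
      r = ∑' j : ℕ, b (n + j + 1) n * (a (n + j) n * L (n + j))} β)
    -- `2α + max {2β, √β} < 1`
    (hcond : 2 * α + max (2 * β) (Real.sqrt β) < 1)
    (φ : ∀ n : ℕ, LinearMap.range (P n : X →ₗ[ℝ] X) → LinearMap.ker (P n : X →ₗ[ℝ] X))
    (hφ : ((∀ n, φ n 0 = 0) ∧
      ∀ (n : ℕ) (ξ ξ' : LinearMap.range (P n : X →ₗ[ℝ] X)),
        ‖(φ n ξ : X) - (φ n ξ' : X)‖ ≤ ‖(ξ : X) - (ξ' : X)‖))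
    (n : ℕ) :
    ∃ x : ∀ m : ℕ, LinearMap.range (P n : X →ₗ[ℝ] X) → LinearMap.range (P m : X →ₗ[ℝ] X),
      -- `x ∈ ℬ_n` and `x` satisfies the fixed point equation for all `m ≥ n`
      ((∀ m : ℕ, n ≤ m → x m 0 = 0) ∧
      (∃ C : ℝ, ∀ m : ℕ, n ≤ m → ∀ ξ : LinearMap.range (P n : X →ₗ[ℝ] X),
        ‖(x m ξ : X)‖ ≤ C * (a m n * ‖(ξ : X)‖)) ∧
      (∀ m : ℕ, n ≤ m → ∀ ξ : LinearMap.range (P n : X →ₗ[ℝ] X),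
        (x m ξ : X) = calA A m n (ξ : X) +
          ∑ k ∈ Finset.Ico n m,
            calA A m (k + 1) (P (k + 1) (f k ((x k ξ : X) + (φ k (x k ξ) : X)))))) ∧
      -- uniqueness of the sequence `(x_m)_{m ≥ n}`
      (∀ y : ∀ m : ℕ, LinearMap.range (P n : X →ₗ[ℝ] X) → LinearMap.range (P m : X →ₗ[ℝ] X),
        ((∀ m : ℕ, n ≤ m → y m 0 = 0) ∧
        (∃ C : ℝ, ∀ m : ℕ, n ≤ m → ∀ ξ : LinearMap.range (P n : X →ₗ[ℝ] X),
          ‖(y m ξ : X)‖ ≤ C * (a m n * ‖(ξ : X)‖)) ∧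
        (∀ m : ℕ, n ≤ m → ∀ ξ : LinearMap.range (P n : X →ₗ[ℝ] X),
          (y m ξ : X) = calA A m n (ξ : X) +
            ∑ k ∈ Finset.Ico n m,
              calA A m (k + 1) (P (k + 1) (f k ((y k ξ : X) + (φ k (y k ξ) : X)))))) →
        ∀ m : ℕ, n ≤ m → ∀ ξ : LinearMap.range (P n : X →ₗ[ℝ] X), y m ξ = x m ξ) ∧
      -- in particular `x_n(ξ) = ξ`
      (∀ ξ : LinearMap.range (P n : X →ₗ[ℝ] X), x n ξ = ξ) := by
  classical
  -- helper facts
  have hproj' : ∀ (k : ℕ) (z : X), P k (P k z) = P k z := fun k z =>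
    DFunLike.congr_fun (hproj k) z
  have hPfix : ∀ (k : ℕ) (z : X), z ∈ LinearMap.range (P k : X →ₗ[ℝ] X) → P k z = z := by
    intro k z hz
    obtain ⟨w, hw⟩ := LinearMap.mem_range.mp hz
    rw [← hw]; exact hproj' k w
  have hS1' : ∀ (m k : ℕ), k ≤ m → ∀ z : X, P m (calA A m k z) = calA A m k (P k z) := by
    intro m k h z
    exact DFunLike.congr_fun (hS1 m k h) z
  have hAP : ∀ (m k : ℕ), k ≤ m → ∀ z : X, ‖calA A m k (P k z)‖ ≤ a m k * ‖z‖ := by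
    intro m k h z
    have h1 := ((calA A m k).comp (P k)).le_opNorm z
    simp only [ContinuousLinearMap.comp_apply] at h1
    exact h1.trans (mul_le_mul_of_nonneg_right (hD1 m k h) (norm_nonneg z))
  have hφ0 : ∀ (k : ℕ) (w : LinearMap.range (P k : X →ₗ[ℝ] X)), ‖(φ k w : X)‖ ≤ ‖(w : X)‖ := by
    intro k w
    have h := hφ.2 k w 0
    simpa [hφ.1 k] using h
  -- invariance of the ranges
  have hmem : ∀ m, n ≤ m → ∀ ξ : X, P n ξ = ξ →
      P m (xAux A P f φ n m ξ) = xAux A P f φ n m ξ := by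
    intro m hm ξ hξ
    rw [xAux_eq, map_add, map_sum]
    congr 1
    · rw [hS1' m n hm ξ, hξ]
    · apply Finset.sum_congr rfl
      intro k hk
      obtain ⟨h1, h2⟩ := Finset.mem_Ico.mp hk
      rw [hS1' m (k + 1) h2 _, hproj' (k + 1)]
  -- positivity facts about the constants
  have hβ0 : 0 ≤ β := by
    refine le_trans ?_ (hβ.1 ⟨0, rfl⟩)
    refine tsum_nonneg fun j => ?_
    exact mul_nonneg (hb (0 + j + 1) 0 (by omega)).le
      (mul_nonneg (ha (0 + j) 0 (by omega)).le (hL0 _))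
  have hα0 : 0 ≤ α := by
    refine le_trans ?_ (hα.1 ⟨1, 0, Nat.zero_lt_one, rfl⟩)
    refine div_nonneg ?_ (ha 1 0 (by omega)).le
    refine Finset.sum_nonneg fun k hk => ?_
    obtain ⟨h1, h2⟩ := Finset.mem_Ico.mp hk
    exact mul_nonneg (ha 1 (k + 1) h2).le (mul_nonneg (ha k 0 h1).le (hL0 k))
  have h2α : 2 * α < 1 := by
    have hmax : 0 ≤ max (2 * β) (Real.sqrt β) := le_max_of_le_left (by linarith)
    linarith
  have hpos : 0 < 1 - 2 * α := by linarith
  set C : ℝ := (1 - 2 * α)⁻¹ with hCdef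
  have hC0 : 0 ≤ C := by rw [hCdef]; positivity
  have hCinv : (1 - 2 * α) * C = 1 := mul_inv_cancel₀ hpos.ne'
  have hC1 : 1 ≤ C := by nlinarith
  have hCid : 1 + 2 * α * C = C := by nlinarith
  -- the norm bound
  have hbound : ∀ m, n ≤ m → ∀ ξ : X, P n ξ = ξ →
      ‖xAux A P f φ n m ξ‖ ≤ C * (a m n * ‖ξ‖) := by
    intro m
    induction m using Nat.strong_induction_on with
    | _ m ih =>
      intro hm ξ hξ
      rw [xAux_eq]
      refine (norm_add_le _ _).trans ?_
      refine (add_le_add le_rfl (norm_sum_le _ _)).trans ?_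
      have h1 : ‖calA A m n ξ‖ ≤ a m n * ‖ξ‖ := by
        calc ‖calA A m n ξ‖ = ‖calA A m n (P n ξ)‖ := by rw [hξ]
        _ ≤ a m n * ‖ξ‖ := hAP m n hm ξ
      have h2 : ∑ k ∈ Finset.Ico n m,
          ‖calA A m (k + 1) (P (k + 1) (f k
            (xAux A P f φ n k ξ +
              (φ k ⟨P k (xAux A P f φ n k ξ),
                LinearMap.mem_range.mpr ⟨xAux A P f φ n k ξ, rfl⟩⟩ : X))))‖
          ≤ ∑ k ∈ Finset.Ico n m, a m (k + 1) * (a k n * L k) * (2 * C * ‖ξ‖) := by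
        apply Finset.sum_le_sum
        intro k hk
        obtain ⟨hnk, hkm⟩ := Finset.mem_Ico.mp hk
        have hz : ‖xAux A P f φ n k ξ‖ ≤ C * (a k n * ‖ξ‖) := ih k hkm hnk ξ hξ
        have hPz : P k (xAux A P f φ n k ξ) = xAux A P f φ n k ξ := hmem k hnk ξ hξ
        have hzmem : xAux A P f φ n k ξ ∈ LinearMap.range (P k : X →ₗ[ℝ] X) :=
          hPz ▸ LinearMap.mem_range.mpr ⟨xAux A P f φ n k ξ, rfl⟩
        have harg : (⟨P k (xAux A P f φ n k ξ),
            LinearMap.mem_range.mpr ⟨xAux A P f φ n k ξ, rfl⟩⟩ : LinearMap.range (P k : X →ₗ[ℝ] X)) =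
            ⟨xAux A P f φ n k ξ, hzmem⟩ := Subtype.ext hPz
        rw [harg]
        have hφle : ‖(φ k ⟨xAux A P f φ n k ξ, hzmem⟩ : X)‖ ≤ ‖xAux A P f φ n k ξ‖ := by
          simpa using hφ0 k ⟨xAux A P f φ n k ξ, hzmem⟩
        have hwle : ‖xAux A P f φ n k ξ + (φ k ⟨xAux A P f φ n k ξ, hzmem⟩ : X)‖
            ≤ 2 * (C * (a k n * ‖ξ‖)) := (norm_add_le _ _).trans (by linarith)
        have hfw : ‖f k (xAux A P f φ n k ξ + (φ k ⟨xAux A P f φ n k ξ, hzmem⟩ : X))‖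
            ≤ L k * ‖xAux A P f φ n k ξ + (φ k ⟨xAux A P f φ n k ξ, hzmem⟩ : X)‖ := by
          simpa [hf0 k] using hLip k (xAux A P f φ n k ξ +
            (φ k ⟨xAux A P f φ n k ξ, hzmem⟩ : X)) 0
        calc ‖calA A m (k + 1) (P (k + 1) (f k (xAux A P f φ n k ξ +
              (φ k ⟨xAux A P f φ n k ξ, hzmem⟩ : X))))‖
            ≤ a m (k + 1) * ‖f k (xAux A P f φ n k ξ +
              (φ k ⟨xAux A P f φ n k ξ, hzmem⟩ : X))‖ := hAP m (k + 1) hkm _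
          _ ≤ a m (k + 1) * (L k * (2 * (C * (a k n * ‖ξ‖)))) := by
              refine mul_le_mul_of_nonneg_left ?_ (ha m (k + 1) hkm).le
              exact hfw.trans (mul_le_mul_of_nonneg_left hwle (hL0 k))
          _ = a m (k + 1) * (a k n * L k) * (2 * C * ‖ξ‖) := by ring
      refine (add_le_add h1 h2).trans ?_
      rw [← Finset.sum_mul]
      rcases eq_or_lt_of_le hm with heq | hlt
      · subst heq
        simp only [Finset.Ico_self, Finset.sum_empty, zero_mul, add_zero]
        have hnn : 0 ≤ a n n * ‖ξ‖ := mul_nonneg (ha n n le_rfl).le (norm_nonneg ξ)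
        nlinarith
      · have hS : (∑ k ∈ Finset.Ico n m, a m (k + 1) * (a k n * L k)) ≤ α * a m n := by
          have hin := hα.1 ⟨m, n, hlt, rfl⟩
          rw [div_le_iff₀ (ha m n hm)] at hin
          linarith [hin]
        have h3 : (∑ k ∈ Finset.Ico n m, a m (k + 1) * (a k n * L k)) * (2 * C * ‖ξ‖)
            ≤ (α * a m n) * (2 * C * ‖ξ‖) := by
          refine mul_le_mul_of_nonneg_right hS ?_
          have hn0 := norm_nonneg ξ
          positivity
        refine (add_le_add le_rfl h3).trans ?_
        have hrw : C * (a m n * ‖ξ‖) = (1 + 2 * α * C) * (a m n * ‖ξ‖) := by rw [hCid]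
        rw [hrw]
        exact le_of_eq (by ring)
  -- the solution
  have hmemR : ∀ m, n ≤ m → ∀ ξ : LinearMap.range (P n : X →ₗ[ℝ] X),
      xAux A P f φ n m ξ.1 ∈ LinearMap.range (P m : X →ₗ[ℝ] X) := fun m hm ξ =>
    (hmem m hm ξ.1 (hPfix n ξ.1 ξ.2)) ▸
      LinearMap.mem_range.mpr ⟨xAux A P f φ n m ξ.1, rfl⟩
  set x : ∀ m : ℕ, LinearMap.range (P n : X →ₗ[ℝ] X) → LinearMap.range (P m : X →ₗ[ℝ] X) :=
    fun m ξ => if h : n ≤ m then ⟨xAux A P f φ n m ξ.1, hmemR m h ξ⟩ else 0 with hxdef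
  have hxval : ∀ m, n ≤ m → ∀ ξ : LinearMap.range (P n : X →ₗ[ℝ] X),
      (x m ξ : X) = xAux A P f φ n m ξ.1 := by
    intro m h ξ
    simp only [hxdef, dif_pos h]
  -- the fixed point equation
  have hxeq : ∀ m : ℕ, n ≤ m → ∀ ξ : LinearMap.range (P n : X →ₗ[ℝ] X),
      (x m ξ : X) = calA A m n (ξ : X) +
        ∑ k ∈ Finset.Ico n m,
          calA A m (k + 1) (P (k + 1) (f k ((x k ξ : X) + (φ k (x k ξ) : X)))) := by
    intro m hm ξ
    rw [hxval m hm ξ, xAux_eq]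
    congr 1
    apply Finset.sum_congr rfl
    intro k hk
    obtain ⟨h1, h2⟩ := Finset.mem_Ico.mp hk
    have hxk : (x k ξ : X) = xAux A P f φ n k ξ.1 := hxval k h1 ξ
    have harg : (⟨P k (xAux A P f φ n k ξ.1),
        LinearMap.mem_range.mpr ⟨xAux A P f φ n k ξ.1, rfl⟩⟩ : LinearMap.range (P k : X →ₗ[ℝ] X)) =
        x k ξ := by
      apply Subtype.ext
      rw [hxk]
      exact hmem k h1 ξ.1 (hPfix n ξ.1 ξ.2)
    rw [harg, hxk]
  refine ⟨x, ⟨?_, ?_, hxeq⟩, ?_, ?_⟩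
  · -- x m 0 = 0
    intro m hm
    apply Subtype.ext
    rw [hxval m hm 0]
    have h0 := hbound m hm ((0 : LinearMap.range (P n : X →ₗ[ℝ] X)) : X) (by simp)
    simp only [ZeroMemClass.coe_zero, norm_zero, mul_zero] at h0
    simpa using norm_le_zero_iff.mp h0
  · -- the norm bound
    exact ⟨C, fun m hm ξ => by
      rw [hxval m hm ξ]; exact hbound m hm ξ.1 (hPfix n ξ.1 ξ.2)⟩
  · -- uniqueness
    rintro y ⟨hy0, hyC, hyeq⟩ m
    induction m using Nat.strong_induction_on with
    | _ m ih =>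
      intro hm ξ
      apply Subtype.ext
      rw [hyeq m hm ξ, hxeq m hm ξ]
      congr 1
      apply Finset.sum_congr rfl
      intro k hk
      obtain ⟨h1, h2⟩ := Finset.mem_Ico.mp hk
      rw [ih k h2 h1 ξ]
  · -- x n ξ = ξ
    intro ξ
    apply Subtype.ext
    rw [hxval n le_rfl ξ, xAux_eq]
    simp [calA_self]
end

section
/- Under the hypotheses that x_{m+1} = A_m x_m admits a general dichotomy with bounds (a_{m,n}) and (b_{m,n}), that the f_m are Lipschitz with f_m(0)=0, that α < +∞ and 2α + max{2β, √β} < 1, the unique sequence x^φ ∈ ℬ_n associated to φ ∈ 𝒳 and n ∈ ℕ satisfies ‖x^φ‖_n ≤ 1/(1 − 2α). -/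
/-- Estimate `‖x^φ‖_n ≤ 1/(1-2α)` for the unique sequence `x^φ ∈ ℬ_n`. -/
theorem norm_xphi_le
    {X : Type*} [NormedAddCommGroup X] [NormedSpace ℝ X] [CompleteSpace X]
    (A P : ℕ → X →L[ℝ] X) (B : ℕ → ℕ → X →L[ℝ] X) (a b : ℕ → ℕ → ℝ)
    -- the bounds are positive
    (ha : ∀ m n : ℕ, n ≤ m → 0 < a m n) (hb : ∀ m n : ℕ, n ≤ m → 0 < b m n)
    -- the `P n` are bounded projections
    (hproj : ∀ n, (P n).comp (P n) = P n)
    -- (S1) : `P m ∘ 𝒜_{m,n} = 𝒜_{m,n} ∘ P n`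
    (hS1 : ∀ m n : ℕ, n ≤ m → (P m).comp (calA A m n) = (calA A m n).comp (P n))
    -- (S2)/(S3) : `B m n` is the operator `(𝒜_{m,n}|_{F n})⁻¹ ∘ Q m`, where `Q m = Id - P m`;
    -- its existence encodes that `𝒜_{m,n}` maps `F n = ker (P n)` bijectively onto `F m`
    (hB1 : ∀ m n : ℕ, n ≤ m → ∀ x : X, calA A m n (B m n x) = x - P m x)
    (hB2 : ∀ m n : ℕ, n ≤ m → ∀ x : X, B m n (calA A m n x) = x - P n x)
    (hBF : ∀ m n : ℕ, n ≤ m → ∀ x : X, P n (B m n x) = 0)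
    -- (D1) : `‖𝒜_{m,n} P n‖ ≤ a m n`
    (hD1 : ∀ m n : ℕ, n ≤ m → ‖(calA A m n).comp (P n)‖ ≤ a m n)
    -- (D2) : `‖(𝒜_{m,n}|_{F n})⁻¹ Q m‖ ≤ b m n`
    (hD2 : ∀ m n : ℕ, n ≤ m → ‖B m n‖ ≤ b m n)
    -- the perturbations `f k` vanish at `0` and are Lipschitz with constant `L k`
    (f : ℕ → X → X) (L : ℕ → ℝ) (hL0 : ∀ k, 0 ≤ L k) (hf0 : ∀ k, f k 0 = 0)
    (hLip : ∀ (k : ℕ) (u v : X), ‖f k u - f k v‖ ≤ L k * ‖u - v‖)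
    -- `α = sup_{m>n} (1/a_{m,n}) ∑_{k=n}^{m-1} a_{m,k+1} a_{k,n} Lip(f k) < ∞`
    (α : ℝ)
    (hα : IsLUB {r : ℝ | ∃ m n : ℕ, n < m ∧
      r = (∑ k ∈ Finset.Ico n m, a m (k + 1) * (a k n * L k)) / a m n} α)
    -- `β = sup_n ∑_{k=n}^{∞} b_{k+1,n} a_{k,n} Lip(f k) < ∞`
    (β : ℝ)
    (hsum : ∀ n : ℕ, Summable fun j : ℕ => b (n + j + 1) n * (a (n + j) n * L (n + j)))
    (hβ : IsLUB {r : ℝ | ∃ n : ℕ,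
      r = ∑' j : ℕ, b (n + j + 1) n * (a (n + j) n * L (n + j))} β)
    -- `2α + max {2β, √β} < 1`
    (hcond : 2 * α + max (2 * β) (Real.sqrt β) < 1)
    (φ : ∀ n : ℕ, LinearMap.range (P n : X →ₗ[ℝ] X) → LinearMap.ker (P n : X →ₗ[ℝ] X))
    (hφ : ((∀ n, φ n 0 = 0) ∧
      ∀ (n : ℕ) (ξ ξ' : LinearMap.range (P n : X →ₗ[ℝ] X)),
        ‖(φ n ξ : X) - (φ n ξ' : X)‖ ≤ ‖(ξ : X) - (ξ' : X)‖))
    (n : ℕ) (x : ∀ m : ℕ, LinearMap.range (P n : X →ₗ[ℝ] X) → LinearMap.range (P m : X →ₗ[ℝ] X))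
    (hx : ((∀ m : ℕ, n ≤ m → x m 0 = 0) ∧
      (∃ C : ℝ, ∀ m : ℕ, n ≤ m → ∀ ξ : LinearMap.range (P n : X →ₗ[ℝ] X),
        ‖(x m ξ : X)‖ ≤ C * (a m n * ‖(ξ : X)‖)) ∧
      (∀ m : ℕ, n ≤ m → ∀ ξ : LinearMap.range (P n : X →ₗ[ℝ] X),
        (x m ξ : X) = calA A m n (ξ : X) +
          ∑ k ∈ Finset.Ico n m,
            calA A m (k + 1) (P (k + 1) (f k ((x k ξ : X) + (φ k (x k ξ) : X)))))))
    :
    ∀ m : ℕ, n ≤ m → ∀ ξ : LinearMap.range (P n : X →ₗ[ℝ] X),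
      ‖(x m ξ : X)‖ ≤ 1 / (1 - 2 * α) * (a m n * ‖(ξ : X)‖) := by
  obtain ⟨hx0, ⟨C, hC⟩, hrec⟩ := hx
  -- α ≥ 0
  have hα0 : 0 ≤ α := by
    have hmem : (∑ k ∈ Finset.Ico 0 1, a 1 (k + 1) * (a k 0 * L k)) / a 1 0 ∈
        {r : ℝ | ∃ m n : ℕ, n < m ∧
          r = (∑ k ∈ Finset.Ico n m, a m (k + 1) * (a k n * L k)) / a m n} :=
      ⟨1, 0, one_pos, rfl⟩
    have hle := hα.1 hmem
    have h0 : 0 ≤ (∑ k ∈ Finset.Ico 0 1, a 1 (k + 1) * (a k 0 * L k)) / a 1 0 := by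
      apply div_nonneg _ (ha 1 0 (by norm_num)).le
      apply Finset.sum_nonneg
      intro k hk
      simp only [Finset.mem_Ico] at hk
      have hk1 : k + 1 ≤ 1 := hk.2
      exact mul_nonneg (ha 1 (k+1) hk1).le (mul_nonneg (ha k 0 hk.1).le (hL0 k))
    linarith
  have h2α : 2 * α < 1 := by
    have h1 : 0 ≤ max (2 * β) (Real.sqrt β) := le_trans (Real.sqrt_nonneg β) (le_max_right _ _)
    linarith
  have hden : 0 < 1 - 2 * α := by linarith
  set t : ℝ := 1 / (1 - 2 * α) with ht_def
  have ht0 : 0 < t := by positivity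
  have ht1 : 1 + 2 * α * t = t := by
    rw [ht_def]
    field_simp <;> ring
  -- projection fixes elements of its range
  have hPfix : ∀ k : ℕ, ∀ u : LinearMap.range (P k : X →ₗ[ℝ] X), P k (u : X) = (u : X) := by
    intro k u
    obtain ⟨y, hy⟩ := u.2
    rw [← hy]
    have := congrFun (congrArg DFunLike.coe (hproj k)) y
    simpa using this
  -- bound on φ
  have hφn : ∀ k : ℕ, ∀ u : LinearMap.range (P k : X →ₗ[ℝ] X), ‖(φ k u : X)‖ ≤ ‖(u : X)‖ := by
    intro k u
    have h := hφ.2 k u 0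
    rw [hφ.1 k] at h
    simpa using h
  -- sum bound from α
  have hαsum : ∀ m : ℕ, n ≤ m →
      (∑ k ∈ Finset.Ico n m, a m (k + 1) * (a k n * L k)) ≤ α * a m n := by
    intro m hm
    rcases eq_or_lt_of_le hm with h | h
    · subst h
      simp only [Finset.Ico_self, Finset.sum_empty]
      exact mul_nonneg hα0 (ha n n le_rfl).le
    · have hmem : (∑ k ∈ Finset.Ico n m, a m (k + 1) * (a k n * L k)) / a m n ∈
          {r : ℝ | ∃ m' n' : ℕ, n' < m' ∧
            r = (∑ k ∈ Finset.Ico n' m', a m' (k + 1) * (a k n' * L k)) / a m' n'} :=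
        ⟨m, n, h, rfl⟩
      have hle := hα.1 hmem
      have hpos := ha m n hm
      rw [div_le_iff₀ hpos] at hle
      linarith [hle]
  -- the key step
  have step : ∀ D : ℝ, 0 ≤ D →
      (∀ m : ℕ, n ≤ m → ∀ ξ : LinearMap.range (P n : X →ₗ[ℝ] X), ‖(x m ξ : X)‖ ≤ D * (a m n * ‖(ξ : X)‖)) →
      ∀ m : ℕ, n ≤ m → ∀ ξ : LinearMap.range (P n : X →ₗ[ℝ] X),
        ‖(x m ξ : X)‖ ≤ (1 + 2 * α * D) * (a m n * ‖(ξ : X)‖) := by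
    intro D hD hgood m hm ξ
    rw [hrec m hm ξ]
    have h1 : ‖calA A m n (ξ : X)‖ ≤ a m n * ‖(ξ : X)‖ := by
      have heq : calA A m n (ξ : X) = ((calA A m n).comp (P n)) (ξ : X) := by
        simp [hPfix n ξ]
      rw [heq]
      calc ‖((calA A m n).comp (P n)) (ξ : X)‖ ≤ ‖(calA A m n).comp (P n)‖ * ‖(ξ : X)‖ :=
            ContinuousLinearMap.le_opNorm _ _
        _ ≤ a m n * ‖(ξ : X)‖ :=
            mul_le_mul_of_nonneg_right (hD1 m n hm) (norm_nonneg _)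
    have hterm : ∀ k ∈ Finset.Ico n m,
        ‖calA A m (k + 1) (P (k + 1) (f k ((x k ξ : X) + (φ k (x k ξ) : X))))‖ ≤
          (2 * D * ‖(ξ : X)‖) * (a m (k + 1) * (a k n * L k)) := by
      intro k hk
      rw [Finset.mem_Ico] at hk
      have hk1 : k + 1 ≤ m := hk.2
      set w : X := (x k ξ : X) + (φ k (x k ξ) : X) with hw
      have hwb : ‖w‖ ≤ 2 * (D * (a k n * ‖(ξ : X)‖)) := by
        have h2 := hφn k (x k ξ)
        have h3 := hgood k hk.1 ξ
        calc ‖w‖ ≤ ‖(x k ξ : X)‖ + ‖(φ k (x k ξ) : X)‖ := norm_add_le _ _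
          _ ≤ ‖(x k ξ : X)‖ + ‖(x k ξ : X)‖ := by linarith
          _ ≤ 2 * (D * (a k n * ‖(ξ : X)‖)) := by linarith
      have hfw : ‖f k w‖ ≤ L k * ‖w‖ := by
        have := hLip k w 0
        rw [hf0 k, sub_zero, sub_zero] at this
        exact this
      have heq : calA A m (k + 1) (P (k + 1) (f k w)) =
          ((calA A m (k + 1)).comp (P (k + 1))) (f k w) := rfl
      calc ‖calA A m (k + 1) (P (k + 1) (f k w))‖
          = ‖((calA A m (k + 1)).comp (P (k + 1))) (f k w)‖ := by rw [heq]
        _ ≤ ‖(calA A m (k + 1)).comp (P (k + 1))‖ * ‖f k w‖ :=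
            ContinuousLinearMap.le_opNorm _ _
        _ ≤ a m (k + 1) * ‖f k w‖ :=
            mul_le_mul_of_nonneg_right (hD1 m (k+1) hk1) (norm_nonneg _)
        _ ≤ a m (k + 1) * (L k * ‖w‖) :=
            mul_le_mul_of_nonneg_left hfw (ha m (k+1) hk1).le
        _ ≤ a m (k + 1) * (L k * (2 * (D * (a k n * ‖(ξ : X)‖)))) := by
            apply mul_le_mul_of_nonneg_left _ (ha m (k+1) hk1).le
            exact mul_le_mul_of_nonneg_left hwb (hL0 k)
        _ = (2 * D * ‖(ξ : X)‖) * (a m (k + 1) * (a k n * L k)) := by ring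
    have hsum2 : ‖∑ k ∈ Finset.Ico n m,
        calA A m (k + 1) (P (k + 1) (f k ((x k ξ : X) + (φ k (x k ξ) : X))))‖ ≤
          (2 * D * ‖(ξ : X)‖) * (α * a m n) := by
      calc ‖∑ k ∈ Finset.Ico n m,
          calA A m (k + 1) (P (k + 1) (f k ((x k ξ : X) + (φ k (x k ξ) : X))))‖
          ≤ ∑ k ∈ Finset.Ico n m,
            ‖calA A m (k + 1) (P (k + 1) (f k ((x k ξ : X) + (φ k (x k ξ) : X))))‖ :=
            norm_sum_le _ _
        _ ≤ ∑ k ∈ Finset.Ico n m, (2 * D * ‖(ξ : X)‖) * (a m (k + 1) * (a k n * L k)) :=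
            Finset.sum_le_sum hterm
        _ = (2 * D * ‖(ξ : X)‖) * ∑ k ∈ Finset.Ico n m, a m (k + 1) * (a k n * L k) := by
            rw [Finset.mul_sum]
        _ ≤ (2 * D * ‖(ξ : X)‖) * (α * a m n) := by
            apply mul_le_mul_of_nonneg_left (hαsum m hm)
            positivity
    calc ‖calA A m n (ξ : X) + ∑ k ∈ Finset.Ico n m,
        calA A m (k + 1) (P (k + 1) (f k ((x k ξ : X) + (φ k (x k ξ) : X))))‖
        ≤ ‖calA A m n (ξ : X)‖ + ‖∑ k ∈ Finset.Ico n m,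
            calA A m (k + 1) (P (k + 1) (f k ((x k ξ : X) + (φ k (x k ξ) : X))))‖ :=
          norm_add_le _ _
      _ ≤ a m n * ‖(ξ : X)‖ + (2 * D * ‖(ξ : X)‖) * (α * a m n) := by linarith
      _ = (1 + 2 * α * D) * (a m n * ‖(ξ : X)‖) := by ring
  -- iterate the step
  set C0 : ℝ := max C t with hC0
  have hC0t : t ≤ C0 := le_max_right _ _
  have iter : ∀ j : ℕ, ∀ m : ℕ, n ≤ m → ∀ ξ : LinearMap.range (P n : X →ₗ[ℝ] X),
      ‖(x m ξ : X)‖ ≤ ((2 * α) ^ j * (C0 - t) + t) * (a m n * ‖(ξ : X)‖) := by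
    intro j
    induction j with
    | zero =>
      intro m hm ξ
      have := hC m hm ξ
      have hle : C ≤ (2 * α) ^ 0 * (C0 - t) + t := by
        simp only [pow_zero, one_mul]
        have : C ≤ C0 := le_max_left _ _
        linarith
      calc ‖(x m ξ : X)‖ ≤ C * (a m n * ‖(ξ : X)‖) := this
        _ ≤ ((2 * α) ^ 0 * (C0 - t) + t) * (a m n * ‖(ξ : X)‖) := by
            apply mul_le_mul_of_nonneg_right hle
            exact mul_nonneg (ha m n hm).le (norm_nonneg _)
    | succ j ih =>
      have hDnn : 0 ≤ (2 * α) ^ j * (C0 - t) + t := by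
        have h1 : 0 ≤ (2 * α) ^ j := by positivity
        have h2 : 0 ≤ C0 - t := by linarith
        nlinarith
      have := step _ hDnn ih
      intro m hm ξ
      have heq : 1 + 2 * α * ((2 * α) ^ j * (C0 - t) + t) =
          (2 * α) ^ (j + 1) * (C0 - t) + t := by
        have : 1 + 2 * α * ((2 * α) ^ j * (C0 - t) + t) =
            (2 * α) ^ (j + 1) * (C0 - t) + (1 + 2 * α * t) := by ring
        rw [this, ht1]
      rw [← heq]
      exact this m hm ξ
  -- pass to the limit
  intro m hm ξ
  have hlim : Filter.Tendsto (fun j : ℕ => ((2 * α) ^ j * (C0 - t) + t) * (a m n * ‖(ξ : X)‖))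
      Filter.atTop (nhds (t * (a m n * ‖(ξ : X)‖))) := by
    have h1 : Filter.Tendsto (fun j : ℕ => (2 * α) ^ j) Filter.atTop (nhds 0) :=
      tendsto_pow_atTop_nhds_zero_of_lt_one (by linarith) h2α
    have h2 := ((h1.mul_const (C0 - t)).add_const t).mul_const (a m n * ‖(ξ : X)‖)
    simpa using h2
  exact ge_of_tendsto hlim (Filter.Eventually.of_forall fun j => iter j m hm ξ)
end

section
/- Under the hypotheses that x_{m+1} = A_m x_m admits a general dichotomy with bounds (a_{m,n}) and (b_{m,n}), that the f_m are Lipschitz with f_m(0)=0, that α < +∞ and 2α + max{2β, √β} < 1, the unique sequence x^φ ∈ ℬ_n associated to φ ∈ 𝒳 and n ∈ ℕ satisfies ‖x^φ_m(ξ) − x^φ_m(ξ̄)‖ ≤ (1/(1 − 2α)) a_{m,n} ‖ξ − ξ̄‖ for every m ≥ n and every ξ, ξ̄ ∈ E_n. -/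
/-- Lipschitz estimate for the unique sequence `x^φ ∈ ℬ_n`. -/
theorem xphi_lipschitz
    {X : Type*} [NormedAddCommGroup X] [NormedSpace ℝ X] [CompleteSpace X]
    (A P : ℕ → X →L[ℝ] X) (B : ℕ → ℕ → X →L[ℝ] X) (a b : ℕ → ℕ → ℝ)
    -- the bounds are positive
    (ha : ∀ m n : ℕ, n ≤ m → 0 < a m n) (hb : ∀ m n : ℕ, n ≤ m → 0 < b m n)
    -- the `P n` are bounded projections
    (hproj : ∀ n, (P n).comp (P n) = P n)
    -- (S1) : `P m ∘ 𝒜_{m,n} = 𝒜_{m,n} ∘ P n`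
    (hS1 : ∀ m n : ℕ, n ≤ m → (P m).comp (calA A m n) = (calA A m n).comp (P n))
    -- (S2)/(S3) : `B m n` is the operator `(𝒜_{m,n}|_{F n})⁻¹ ∘ Q m`, where `Q m = Id - P m`;
    -- its existence encodes that `𝒜_{m,n}` maps `F n = ker (P n)` bijectively onto `F m`
    (hB1 : ∀ m n : ℕ, n ≤ m → ∀ x : X, calA A m n (B m n x) = x - P m x)
    (hB2 : ∀ m n : ℕ, n ≤ m → ∀ x : X, B m n (calA A m n x) = x - P n x)
    (hBF : ∀ m n : ℕ, n ≤ m → ∀ x : X, P n (B m n x) = 0)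
    -- (D1) : `‖𝒜_{m,n} P n‖ ≤ a m n`
    (hD1 : ∀ m n : ℕ, n ≤ m → ‖(calA A m n).comp (P n)‖ ≤ a m n)
    -- (D2) : `‖(𝒜_{m,n}|_{F n})⁻¹ Q m‖ ≤ b m n`
    (hD2 : ∀ m n : ℕ, n ≤ m → ‖B m n‖ ≤ b m n)
    -- the perturbations `f k` vanish at `0` and are Lipschitz with constant `L k`
    (f : ℕ → X → X) (L : ℕ → ℝ) (hL0 : ∀ k, 0 ≤ L k) (hf0 : ∀ k, f k 0 = 0)
    (hLip : ∀ (k : ℕ) (u v : X), ‖f k u - f k v‖ ≤ L k * ‖u - v‖)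
    -- `α = sup_{m>n} (1/a_{m,n}) ∑_{k=n}^{m-1} a_{m,k+1} a_{k,n} Lip(f k) < ∞`
    (α : ℝ)
    (hα : IsLUB {r : ℝ | ∃ m n : ℕ, n < m ∧
      r = (∑ k ∈ Finset.Ico n m, a m (k + 1) * (a k n * L k)) / a m n} α)
    -- `β = sup_n ∑_{k=n}^{∞} b_{k+1,n} a_{k,n} Lip(f k) < ∞`
    (β : ℝ)
    (hsum : ∀ n : ℕ, Summable fun j : ℕ => b (n + j + 1) n * (a (n + j) n * L (n + j)))
    (hβ : IsLUB {r : ℝ | ∃ n : ℕ,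
      r = ∑' j : ℕ, b (n + j + 1) n * (a (n + j) n * L (n + j))} β)
    -- `2α + max {2β, √β} < 1`
    (hcond : 2 * α + max (2 * β) (Real.sqrt β) < 1)
    (φ : ∀ n : ℕ, LinearMap.range (P n : X →ₗ[ℝ] X) → LinearMap.ker (P n : X →ₗ[ℝ] X))
    (hφ : ((∀ n, φ n 0 = 0) ∧
      ∀ (n : ℕ) (ξ ξ' : LinearMap.range (P n : X →ₗ[ℝ] X)),
        ‖(φ n ξ : X) - (φ n ξ' : X)‖ ≤ ‖(ξ : X) - (ξ' : X)‖))
    (n : ℕ) (x : ∀ m : ℕ, LinearMap.range (P n : X →ₗ[ℝ] X) → LinearMap.range (P m : X →ₗ[ℝ] X))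
    (hx : ((∀ m : ℕ, n ≤ m → x m 0 = 0) ∧
      (∃ C : ℝ, ∀ m : ℕ, n ≤ m → ∀ ξ : LinearMap.range (P n : X →ₗ[ℝ] X),
        ‖(x m ξ : X)‖ ≤ C * (a m n * ‖(ξ : X)‖)) ∧
      (∀ m : ℕ, n ≤ m → ∀ ξ : LinearMap.range (P n : X →ₗ[ℝ] X),
        (x m ξ : X) = calA A m n (ξ : X) +
          ∑ k ∈ Finset.Ico n m,
            calA A m (k + 1) (P (k + 1) (f k ((x k ξ : X) + (φ k (x k ξ) : X)))))))
    :
    ∀ m : ℕ, n ≤ m → ∀ ξ ξ' : LinearMap.range (P n : X →ₗ[ℝ] X),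
      ‖(x m ξ : X) - (x m ξ' : X)‖ ≤ 1 / (1 - 2 * α) * (a m n * ‖(ξ : X) - (ξ' : X)‖) := by
  obtain ⟨hφ0, hφlip⟩ := hφ
  obtain ⟨hx0, ⟨C, hC⟩, hrec⟩ := hx
  intro m hm ξ ξ'
  have hPfix : ∀ (k : ℕ) (v : X), v ∈ LinearMap.range (P k : X →ₗ[ℝ] X) → P k v = v := by
    rintro k v ⟨y, rfl⟩
    have h := congrArg (fun T : X →L[ℝ] X => T y) (hproj k)
    simpa using h
  -- the set of ratios and its supremum
  set S : Set ℝ := {r : ℝ | ∃ k : ℕ, n ≤ k ∧ r = ‖(x k ξ : X) - (x k ξ' : X)‖ / a k n}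
    with hSdef
  have hSne : S.Nonempty := ⟨‖(x n ξ : X) - (x n ξ' : X)‖ / a n n, n, le_refl n, rfl⟩
  have hSbdd : BddAbove S := by
    refine ⟨max C 0 * (‖(ξ : X)‖ + ‖(ξ' : X)‖), ?_⟩
    rintro r ⟨k, hk, rfl⟩
    rw [div_le_iff₀ (ha k n hk)]
    have h1 : ‖(x k ξ : X)‖ ≤ max C 0 * (a k n * ‖(ξ : X)‖) :=
      le_trans (hC k hk ξ) (mul_le_mul_of_nonneg_right (le_max_left _ _)
        (mul_nonneg (ha k n hk).le (norm_nonneg _)))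
    have h2 : ‖(x k ξ' : X)‖ ≤ max C 0 * (a k n * ‖(ξ' : X)‖) :=
      le_trans (hC k hk ξ') (mul_le_mul_of_nonneg_right (le_max_left _ _)
        (mul_nonneg (ha k n hk).le (norm_nonneg _)))
    have h3 : ‖(x k ξ : X) - (x k ξ' : X)‖ ≤ ‖(x k ξ : X)‖ + ‖(x k ξ' : X)‖ :=
      norm_sub_le _ _
    nlinarith [h1, h2, h3]
  set s : ℝ := sSup S with hsdef
  have hsge : ∀ k, n ≤ k → ‖(x k ξ : X) - (x k ξ' : X)‖ / a k n ≤ s :=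
    fun k hk => le_csSup hSbdd ⟨k, hk, rfl⟩
  have hs0 : 0 ≤ s :=
    le_trans (div_nonneg (norm_nonneg _) (ha n n le_rfl).le) (hsge n le_rfl)
  have hDs : ∀ k, n ≤ k → ‖(x k ξ : X) - (x k ξ' : X)‖ ≤ s * a k n := by
    intro k hk
    have h := hsge k hk
    rw [div_le_iff₀ (ha k n hk)] at h
    linarith
  -- α is nonnegative
  have hα0 : 0 ≤ α := by
    have hmem : (∑ k ∈ Finset.Ico 0 1, a 1 (k + 1) * (a k 0 * L k)) / a 1 0 ∈
        {r : ℝ | ∃ m n : ℕ, n < m ∧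
          r = (∑ k ∈ Finset.Ico n m, a m (k + 1) * (a k n * L k)) / a m n} :=
      ⟨1, 0, Nat.one_pos, rfl⟩
    refine le_trans ?_ (hα.1 hmem)
    apply div_nonneg _ (ha 1 0 (by norm_num)).le
    apply Finset.sum_nonneg
    intro k hk
    simp only [Finset.mem_Ico] at hk
    exact mul_nonneg (ha 1 (k + 1) (by omega)).le
      (mul_nonneg (ha k 0 (by omega)).le (hL0 k))
  have h2α : 2 * α < 1 := by
    have h1 := Real.sqrt_nonneg β
    have hmax : (0 : ℝ) ≤ max (2 * β) (Real.sqrt β) := le_trans h1 (le_max_right _ _)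
    linarith
  have h1pos : 0 < 1 - 2 * α := by linarith
  -- Lipschitz bound on the perturbation terms
  have hfd : ∀ k, n ≤ k →
      ‖f k ((x k ξ : X) + (φ k (x k ξ) : X)) - f k ((x k ξ' : X) + (φ k (x k ξ') : X))‖
        ≤ L k * (2 * ‖(x k ξ : X) - (x k ξ' : X)‖) := by
    intro k hk
    refine le_trans (hLip k _ _) ?_
    refine mul_le_mul_of_nonneg_left ?_ (hL0 k)
    have h1 : ((x k ξ : X) + (φ k (x k ξ) : X)) - ((x k ξ' : X) + (φ k (x k ξ') : X))
        = ((x k ξ : X) - (x k ξ' : X)) + ((φ k (x k ξ) : X) - (φ k (x k ξ') : X)) := by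
      abel
    rw [h1]
    refine le_trans (norm_add_le _ _) ?_
    have h2 := hφlip k (x k ξ) (x k ξ')
    linarith
  -- main estimate
  have hmain : ∀ m', n ≤ m' →
      ‖(x m' ξ : X) - (x m' ξ' : X)‖
        ≤ a m' n * ‖(ξ : X) - (ξ' : X)‖ + 2 * α * s * a m' n := by
    intro m' hm'
    have heq : (x m' ξ : X) - (x m' ξ' : X) =
        ((calA A m' n).comp (P n)) ((ξ : X) - (ξ' : X)) +
        ∑ k ∈ Finset.Ico n m',
          ((calA A m' (k + 1)).comp (P (k + 1)))
            (f k ((x k ξ : X) + (φ k (x k ξ) : X))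
              - f k ((x k ξ' : X) + (φ k (x k ξ') : X))) := by
      rw [hrec m' hm' ξ, hrec m' hm' ξ']
      simp only [ContinuousLinearMap.comp_apply, map_sub]
      rw [hPfix n (ξ : X) ξ.2, hPfix n (ξ' : X) ξ'.2, Finset.sum_sub_distrib]
      abel
    have hb1 : ‖((calA A m' n).comp (P n)) ((ξ : X) - (ξ' : X))‖
        ≤ a m' n * ‖(ξ : X) - (ξ' : X)‖ :=
      le_trans (ContinuousLinearMap.le_opNorm _ _)
        (mul_le_mul_of_nonneg_right (hD1 m' n hm') (norm_nonneg _))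
    have hb2 : ‖∑ k ∈ Finset.Ico n m',
          ((calA A m' (k + 1)).comp (P (k + 1)))
            (f k ((x k ξ : X) + (φ k (x k ξ) : X))
              - f k ((x k ξ' : X) + (φ k (x k ξ') : X)))‖
        ≤ 2 * s * ∑ k ∈ Finset.Ico n m', a m' (k + 1) * (a k n * L k) := by
      refine le_trans (norm_sum_le _ _) ?_
      rw [Finset.mul_sum]
      apply Finset.sum_le_sum
      intro k hk
      simp only [Finset.mem_Ico] at hk
      have hk1 : k + 1 ≤ m' := hk.2
      calc ‖((calA A m' (k + 1)).comp (P (k + 1)))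
              (f k ((x k ξ : X) + (φ k (x k ξ) : X))
                - f k ((x k ξ' : X) + (φ k (x k ξ') : X)))‖
          ≤ a m' (k + 1) * ‖f k ((x k ξ : X) + (φ k (x k ξ) : X))
                - f k ((x k ξ' : X) + (φ k (x k ξ') : X))‖ :=
            le_trans (ContinuousLinearMap.le_opNorm _ _)
              (mul_le_mul_of_nonneg_right (hD1 m' (k + 1) hk1) (norm_nonneg _))
        _ ≤ a m' (k + 1) * (L k * (2 * ‖(x k ξ : X) - (x k ξ' : X)‖)) :=
            mul_le_mul_of_nonneg_left (hfd k hk.1) (ha m' (k + 1) hk1).le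
        _ ≤ a m' (k + 1) * (L k * (2 * (s * a k n))) := by
            refine mul_le_mul_of_nonneg_left ?_ (ha m' (k + 1) hk1).le
            refine mul_le_mul_of_nonneg_left ?_ (hL0 k)
            have := hDs k hk.1
            linarith
        _ = 2 * s * (a m' (k + 1) * (a k n * L k)) := by ring
    have hb3 : (∑ k ∈ Finset.Ico n m', a m' (k + 1) * (a k n * L k)) ≤ α * a m' n := by
      rcases eq_or_lt_of_le hm' with h | h
      · rw [← h, Finset.Ico_self, Finset.sum_empty]
        exact mul_nonneg hα0 (ha n n le_rfl).le
      · have hmem : (∑ k ∈ Finset.Ico n m', a m' (k + 1) * (a k n * L k)) / a m' n ∈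
            {r : ℝ | ∃ m n : ℕ, n < m ∧
              r = (∑ k ∈ Finset.Ico n m, a m (k + 1) * (a k n * L k)) / a m n} :=
          ⟨m', n, h, rfl⟩
        have h2 := hα.1 hmem
        rw [div_le_iff₀ (ha m' n hm')] at h2
        linarith
    have htot : ‖(x m' ξ : X) - (x m' ξ' : X)‖
        ≤ a m' n * ‖(ξ : X) - (ξ' : X)‖
          + 2 * s * ∑ k ∈ Finset.Ico n m', a m' (k + 1) * (a k n * L k) := by
      rw [heq]
      exact le_trans (norm_add_le _ _) (by linarith [hb1, hb2])
    nlinarith [htot, hb3, hs0]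
  -- conclude
  have hs_le : s ≤ ‖(ξ : X) - (ξ' : X)‖ + 2 * α * s := by
    apply csSup_le hSne
    rintro r ⟨k, hk, rfl⟩
    rw [div_le_iff₀ (ha k n hk)]
    nlinarith [hmain k hk]
  have hs_final : s ≤ ‖(ξ : X) - (ξ' : X)‖ / (1 - 2 * α) := by
    rw [le_div_iff₀ h1pos]
    nlinarith [hs_le]
  calc ‖(x m ξ : X) - (x m ξ' : X)‖ ≤ s * a m n := hDs m hm
    _ ≤ (‖(ξ : X) - (ξ' : X)‖ / (1 - 2 * α)) * a m n :=
        mul_le_mul_of_nonneg_right hs_final (ha m n hm).le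
    _ = 1 / (1 - 2 * α) * (a m n * ‖(ξ : X) - (ξ' : X)‖) := by ring
end

section
/- Under the hypotheses that x_{m+1} = A_m x_m admits a general dichotomy with bounds (a_{m,n}) and (b_{m,n}), that the f_m are Lipschitz with f_m(0)=0, that α < +∞ and 2α + max{2β, √β} < 1, for any φ, ψ ∈ 𝒳 and any n ∈ ℕ the associated sequences x^φ, x^ψ ∈ ℬ_n satisfy ‖x^φ − x^ψ‖_n ≤ (α/(1 − 2α)²) d(φ, ψ), where d(φ,ψ) = sup{‖φ_k(ξ) − ψ_k(ξ)‖/‖ξ‖ : k ∈ ℕ, ξ ∈ E_k \ {0}}. -/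
/-- Estimate `‖x^φ - x^ψ‖_n ≤ (α/(1-2α)²) d(φ,ψ)`. -/
theorem xphi_sub_xpsi_le
    {X : Type*} [NormedAddCommGroup X] [NormedSpace ℝ X] [CompleteSpace X]
    (A P : ℕ → X →L[ℝ] X) (B : ℕ → ℕ → X →L[ℝ] X) (a b : ℕ → ℕ → ℝ)
    -- the bounds are positive
    (ha : ∀ m n : ℕ, n ≤ m → 0 < a m n) (hb : ∀ m n : ℕ, n ≤ m → 0 < b m n)
    -- the `P n` are bounded projections
    (hproj : ∀ n, (P n).comp (P n) = P n)
    -- (S1) : `P m ∘ 𝒜_{m,n} = 𝒜_{m,n} ∘ P n`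
    (hS1 : ∀ m n : ℕ, n ≤ m → (P m).comp (calA A m n) = (calA A m n).comp (P n))
    -- (S2)/(S3) : `B m n` is the operator `(𝒜_{m,n}|_{F n})⁻¹ ∘ Q m`, where `Q m = Id - P m`;
    -- its existence encodes that `𝒜_{m,n}` maps `F n = ker (P n)` bijectively onto `F m`
    (hB1 : ∀ m n : ℕ, n ≤ m → ∀ x : X, calA A m n (B m n x) = x - P m x)
    (hB2 : ∀ m n : ℕ, n ≤ m → ∀ x : X, B m n (calA A m n x) = x - P n x)
    (hBF : ∀ m n : ℕ, n ≤ m → ∀ x : X, P n (B m n x) = 0)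
    -- (D1) : `‖𝒜_{m,n} P n‖ ≤ a m n`
    (hD1 : ∀ m n : ℕ, n ≤ m → ‖(calA A m n).comp (P n)‖ ≤ a m n)
    -- (D2) : `‖(𝒜_{m,n}|_{F n})⁻¹ Q m‖ ≤ b m n`
    (hD2 : ∀ m n : ℕ, n ≤ m → ‖B m n‖ ≤ b m n)
    -- the perturbations `f k` vanish at `0` and are Lipschitz with constant `L k`
    (f : ℕ → X → X) (L : ℕ → ℝ) (hL0 : ∀ k, 0 ≤ L k) (hf0 : ∀ k, f k 0 = 0)
    (hLip : ∀ (k : ℕ) (u v : X), ‖f k u - f k v‖ ≤ L k * ‖u - v‖)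
    -- `α = sup_{m>n} (1/a_{m,n}) ∑_{k=n}^{m-1} a_{m,k+1} a_{k,n} Lip(f k) < ∞`
    (α : ℝ)
    (hα : IsLUB {r : ℝ | ∃ m n : ℕ, n < m ∧
      r = (∑ k ∈ Finset.Ico n m, a m (k + 1) * (a k n * L k)) / a m n} α)
    -- `β = sup_n ∑_{k=n}^{∞} b_{k+1,n} a_{k,n} Lip(f k) < ∞`
    (β : ℝ)
    (hsum : ∀ n : ℕ, Summable fun j : ℕ => b (n + j + 1) n * (a (n + j) n * L (n + j)))
    (hβ : IsLUB {r : ℝ | ∃ n : ℕ,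
      r = ∑' j : ℕ, b (n + j + 1) n * (a (n + j) n * L (n + j))} β)
    -- `2α + max {2β, √β} < 1`
    (hcond : 2 * α + max (2 * β) (Real.sqrt β) < 1)
    (φ : ∀ n : ℕ, LinearMap.range (P n : X →ₗ[ℝ] X) → LinearMap.ker (P n : X →ₗ[ℝ] X))
    (hφ : ((∀ n, φ n 0 = 0) ∧
      ∀ (n : ℕ) (ξ ξ' : LinearMap.range (P n : X →ₗ[ℝ] X)),
        ‖(φ n ξ : X) - (φ n ξ' : X)‖ ≤ ‖(ξ : X) - (ξ' : X)‖))
    (ψ : ∀ n : ℕ, LinearMap.range (P n : X →ₗ[ℝ] X) → LinearMap.ker (P n : X →ₗ[ℝ] X))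
    (hψ : ((∀ n, ψ n 0 = 0) ∧
      ∀ (n : ℕ) (ξ ξ' : LinearMap.range (P n : X →ₗ[ℝ] X)),
        ‖(ψ n ξ : X) - (ψ n ξ' : X)‖ ≤ ‖(ξ : X) - (ξ' : X)‖))
    (n : ℕ) (x : ∀ m : ℕ, LinearMap.range (P n : X →ₗ[ℝ] X) → LinearMap.range (P m : X →ₗ[ℝ] X))
    (hx : ((∀ m : ℕ, n ≤ m → x m 0 = 0) ∧
      (∃ C : ℝ, ∀ m : ℕ, n ≤ m → ∀ ξ : LinearMap.range (P n : X →ₗ[ℝ] X),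
        ‖(x m ξ : X)‖ ≤ C * (a m n * ‖(ξ : X)‖)) ∧
      (∀ m : ℕ, n ≤ m → ∀ ξ : LinearMap.range (P n : X →ₗ[ℝ] X),
        (x m ξ : X) = calA A m n (ξ : X) +
          ∑ k ∈ Finset.Ico n m,
            calA A m (k + 1) (P (k + 1) (f k ((x k ξ : X) + (φ k (x k ξ) : X)))))))
    (y : ∀ m : ℕ, LinearMap.range (P n : X →ₗ[ℝ] X) → LinearMap.range (P m : X →ₗ[ℝ] X))
    (hy : ((∀ m : ℕ, n ≤ m → y m 0 = 0) ∧
      (∃ C : ℝ, ∀ m : ℕ, n ≤ m → ∀ ξ : LinearMap.range (P n : X →ₗ[ℝ] X),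
        ‖(y m ξ : X)‖ ≤ C * (a m n * ‖(ξ : X)‖)) ∧
      (∀ m : ℕ, n ≤ m → ∀ ξ : LinearMap.range (P n : X →ₗ[ℝ] X),
        (y m ξ : X) = calA A m n (ξ : X) +
          ∑ k ∈ Finset.Ico n m,
            calA A m (k + 1) (P (k + 1) (f k ((y k ξ : X) + (ψ k (y k ξ) : X))))))) :
    ∀ m : ℕ, n ≤ m → ∀ ξ : LinearMap.range (P n : X →ₗ[ℝ] X),
      ‖(x m ξ : X) - (y m ξ : X)‖ ≤
        α / (1 - 2 * α) ^ 2 *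
          sSup {r : ℝ | ∃ (k : ℕ) (ζ : LinearMap.range (P k : X →ₗ[ℝ] X)), ζ ≠ 0 ∧
            r = ‖(φ k ζ : X) - (ψ k ζ : X)‖ / ‖(ζ : X)‖} *
          (a m n * ‖(ξ : X)‖) := by
  obtain ⟨hφ0, hφL⟩ := hφ
  obtain ⟨hψ0, hψL⟩ := hψ
  obtain ⟨hx0, -, hxeq⟩ := hx
  obtain ⟨hy0, -, hyeq⟩ := hy
  set S : Set ℝ := {r : ℝ | ∃ (k : ℕ) (ζ : LinearMap.range (P k : X →ₗ[ℝ] X)), ζ ≠ 0 ∧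
      r = ‖(φ k ζ : X) - (ψ k ζ : X)‖ / ‖(ζ : X)‖} with hS
  set d := sSup S with hddef
  -- basic positivity facts
  have hα0 : 0 ≤ α := by
    have h1 : ((∑ k ∈ Finset.Ico 0 1, a 1 (k + 1) * (a k 0 * L k)) / a 1 0) ∈
        {r : ℝ | ∃ m n : ℕ, n < m ∧
          r = (∑ k ∈ Finset.Ico n m, a m (k + 1) * (a k n * L k)) / a m n} :=
      ⟨1, 0, one_pos, rfl⟩
    have h2 := hα.1 h1
    have h3 : (0:ℝ) ≤ (∑ k ∈ Finset.Ico 0 1, a 1 (k + 1) * (a k 0 * L k)) / a 1 0 := by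
      apply div_nonneg _ (ha 1 0 (by norm_num)).le
      apply Finset.sum_nonneg
      intro k hk
      have hk' : k = 0 := by simpa using hk
      subst hk'
      have := ha 1 1 le_rfl
      have := ha 0 0 le_rfl
      have := hL0 0
      positivity
    linarith
  have h2α : 2 * α < 1 := by
    have h1 : (0:ℝ) ≤ max (2 * β) (Real.sqrt β) :=
      le_trans (Real.sqrt_nonneg β) (le_max_right _ _)
    linarith
  have h1α : (0:ℝ) < 1 - 2 * α := by linarith
  have hd0 : 0 ≤ d := by
    apply Real.sSup_nonneg
    rintro r ⟨k, ζ, hζ, rfl⟩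
    positivity
  -- d is an "upper bound": Lipschitz-distance estimate
  have hdub : ∀ (k : ℕ) (ζ : LinearMap.range (P k : X →ₗ[ℝ] X)),
      ‖(φ k ζ : X) - (ψ k ζ : X)‖ ≤ d * ‖(ζ : X)‖ := by
    intro k ζ
    by_cases hζ : ζ = 0
    · subst hζ
      simp [hφ0 k, hψ0 k, mul_nonneg hd0 (norm_nonneg _)]
    · have hζX : ((ζ : X)) ≠ 0 := fun h => hζ (Subtype.coe_injective (by simpa using h))
      have hζpos : (0:ℝ) < ‖(ζ : X)‖ := norm_pos_iff.mpr hζX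
      have hbdd : BddAbove S := by
        refine ⟨2, ?_⟩
        rintro r ⟨j, η, hη, rfl⟩
        have hηX : ((η : X)) ≠ 0 := fun h => hη (Subtype.coe_injective (by simpa using h))
        have hηpos : (0:ℝ) < ‖(η : X)‖ := norm_pos_iff.mpr hηX
        rw [div_le_iff₀ hηpos]
        have h1 : ‖(φ j η : X) - (ψ j η : X)‖ ≤ ‖(φ j η : X)‖ + ‖(ψ j η : X)‖ :=
          norm_sub_le _ _
        have h2 : ‖(φ j η : X)‖ ≤ ‖(η : X)‖ := by
          have := hφL j η 0
          simpa [hφ0 j] using this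
        have h3 : ‖(ψ j η : X)‖ ≤ ‖(η : X)‖ := by
          have := hψL j η 0
          simpa [hψ0 j] using this
        linarith
      have hmem : ‖(φ k ζ : X) - (ψ k ζ : X)‖ / ‖(ζ : X)‖ ∈ S := ⟨k, ζ, hζ, rfl⟩
      have := le_csSup hbdd hmem
      rw [div_le_iff₀ hζpos] at this
      linarith [this]
  -- projections fix elements of their range
  have hPfix : ∀ (k : ℕ) (ζ : LinearMap.range (P k : X →ₗ[ℝ] X)), P k (ζ : X) = (ζ : X) := by
    intro k ζ
    obtain ⟨v, hv⟩ := ζ.2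
    have := DFunLike.congr_fun (hproj k) v
    simp only [ContinuousLinearMap.comp_apply] at this
    rw [← hv]
    exact this
  -- operator norm estimate through the projection
  have hAP : ∀ m k : ℕ, k ≤ m → ∀ w : X, ‖calA A m k (P k w)‖ ≤ a m k * ‖w‖ := by
    intro m k hkm w
    have h1 := ((calA A m k).comp (P k)).le_opNorm w
    have h2 := hD1 m k hkm
    calc ‖calA A m k (P k w)‖ = ‖((calA A m k).comp (P k)) w‖ := rfl
      _ ≤ ‖(calA A m k).comp (P k)‖ * ‖w‖ := h1
      _ ≤ a m k * ‖w‖ := mul_le_mul_of_nonneg_right h2 (norm_nonneg w)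
  have hAξ : ∀ m : ℕ, n ≤ m → ∀ ξ : LinearMap.range (P n : X →ₗ[ℝ] X),
      ‖calA A m n (ξ : X)‖ ≤ a m n * ‖(ξ : X)‖ := by
    intro m hnm ξ
    have := hAP m n hnm (ξ : X)
    rwa [hPfix n ξ] at this
  -- the α-sum estimate
  have hsumle : ∀ m : ℕ, n ≤ m →
      ∑ k ∈ Finset.Ico n m, a m (k + 1) * (a k n * L k) ≤ α * a m n := by
    intro m hnm
    rcases eq_or_lt_of_le hnm with h | h
    · subst h
      simp only [Finset.Ico_self, Finset.sum_empty]
      exact mul_nonneg hα0 (ha _ _ le_rfl).le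
    · have hmem : ((∑ k ∈ Finset.Ico n m, a m (k + 1) * (a k n * L k)) / a m n) ∈
          {r : ℝ | ∃ m' n' : ℕ, n' < m' ∧
            r = (∑ k ∈ Finset.Ico n' m', a m' (k + 1) * (a k n' * L k)) / a m' n'} :=
        ⟨m, n, h, rfl⟩
      have := hα.1 hmem
      rw [div_le_iff₀ (ha m n hnm)] at this
      linarith
  -- a priori bound on y : ‖y_m ξ‖ ≤ a_{m,n} ‖ξ‖ / (1 - 2α)
  have hyN : ∀ m : ℕ, n ≤ m → ∀ ξ : LinearMap.range (P n : X →ₗ[ℝ] X),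
      ‖(y m ξ : X)‖ ≤ 1 / (1 - 2 * α) * (a m n * ‖(ξ : X)‖) := by
    intro m
    induction m using Nat.strong_induction_on with
    | _ m ih =>
      intro hnm ξ
      have hterm : ∀ k ∈ Finset.Ico n m,
          ‖calA A m (k + 1) (P (k + 1) (f k ((y k ξ : X) + (ψ k (y k ξ) : X))))‖ ≤
            a m (k + 1) * (a k n * L k) * (2 / (1 - 2 * α) * ‖(ξ : X)‖) := by
        intro k hk
        obtain ⟨hnk, hkm⟩ := Finset.mem_Ico.mp hk
        have hky := ih k hkm hnk ξ
        have hψk : ‖(ψ k (y k ξ) : X)‖ ≤ ‖(y k ξ : X)‖ := by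
          have := hψL k (y k ξ) 0
          simpa [hψ0 k] using this
        have hwf : ‖f k ((y k ξ : X) + (ψ k (y k ξ) : X))‖ ≤
            L k * (2 * ‖(y k ξ : X)‖) := by
          have h1 := hLip k ((y k ξ : X) + (ψ k (y k ξ) : X)) 0
          have h2 : ‖(y k ξ : X) + (ψ k (y k ξ) : X)‖ ≤ 2 * ‖(y k ξ : X)‖ := by
            have := norm_add_le ((y k ξ : X)) ((ψ k (y k ξ) : X))
            linarith
          have h3 : ‖f k ((y k ξ : X) + (ψ k (y k ξ) : X))‖ ≤
              L k * ‖(y k ξ : X) + (ψ k (y k ξ) : X)‖ := by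
            simpa [hf0 k] using h1
          calc ‖f k ((y k ξ : X) + (ψ k (y k ξ) : X))‖ ≤
              L k * ‖(y k ξ : X) + (ψ k (y k ξ) : X)‖ := h3
            _ ≤ L k * (2 * ‖(y k ξ : X)‖) :=
              mul_le_mul_of_nonneg_left h2 (hL0 k)
        have h4 := hAP m (k + 1) hkm (f k ((y k ξ : X) + (ψ k (y k ξ) : X)))
        calc ‖calA A m (k + 1) (P (k + 1) (f k ((y k ξ : X) + (ψ k (y k ξ) : X))))‖ ≤
            a m (k + 1) * ‖f k ((y k ξ : X) + (ψ k (y k ξ) : X))‖ := h4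
          _ ≤ a m (k + 1) * (L k * (2 * ‖(y k ξ : X)‖)) :=
            mul_le_mul_of_nonneg_left hwf (ha m (k + 1) hkm).le
          _ ≤ a m (k + 1) * (L k * (2 * (1 / (1 - 2 * α) * (a k n * ‖(ξ : X)‖)))) := by
            have hLk := hL0 k
            have hak := (ha m (k + 1) hkm).le
            have : L k * (2 * ‖(y k ξ : X)‖) ≤
                L k * (2 * (1 / (1 - 2 * α) * (a k n * ‖(ξ : X)‖))) := by
              apply mul_le_mul_of_nonneg_left _ hLk
              linarith
            exact mul_le_mul_of_nonneg_left this hak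
          _ = a m (k + 1) * (a k n * L k) * (2 / (1 - 2 * α) * ‖(ξ : X)‖) := by
            field_simp
      have hsum2 : ‖∑ k ∈ Finset.Ico n m,
          calA A m (k + 1) (P (k + 1) (f k ((y k ξ : X) + (ψ k (y k ξ) : X))))‖ ≤
          α * a m n * (2 / (1 - 2 * α) * ‖(ξ : X)‖) := by
        calc ‖∑ k ∈ Finset.Ico n m,
            calA A m (k + 1) (P (k + 1) (f k ((y k ξ : X) + (ψ k (y k ξ) : X))))‖ ≤
            ∑ k ∈ Finset.Ico n m,
              ‖calA A m (k + 1) (P (k + 1) (f k ((y k ξ : X) + (ψ k (y k ξ) : X))))‖ :=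
            norm_sum_le _ _
          _ ≤ ∑ k ∈ Finset.Ico n m,
              a m (k + 1) * (a k n * L k) * (2 / (1 - 2 * α) * ‖(ξ : X)‖) :=
            Finset.sum_le_sum hterm
          _ = (∑ k ∈ Finset.Ico n m, a m (k + 1) * (a k n * L k)) *
              (2 / (1 - 2 * α) * ‖(ξ : X)‖) := by rw [Finset.sum_mul]
          _ ≤ α * a m n * (2 / (1 - 2 * α) * ‖(ξ : X)‖) := by
            apply mul_le_mul_of_nonneg_right (hsumle m hnm)
            positivity
      rw [hyeq m hnm ξ]
      have h5 := norm_add_le (calA A m n (ξ : X))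
        (∑ k ∈ Finset.Ico n m,
          calA A m (k + 1) (P (k + 1) (f k ((y k ξ : X) + (ψ k (y k ξ) : X)))))
      have h6 := hAξ m hnm ξ
      have hkey : a m n * ‖(ξ : X)‖ + α * a m n * (2 / (1 - 2 * α) * ‖(ξ : X)‖) =
          1 / (1 - 2 * α) * (a m n * ‖(ξ : X)‖) := by
        have hinv := mul_inv_cancel₀ h1α.ne'
        linear_combination (-(a m n * ‖(ξ : X)‖)) * hinv
      linarith
  -- the main estimate by strong induction
  set D := α * d / (1 - 2 * α) ^ 2 with hD
  have hD0 : 0 ≤ D := by positivity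
  have main : ∀ m : ℕ, n ≤ m → ∀ ξ : LinearMap.range (P n : X →ₗ[ℝ] X),
      ‖(x m ξ : X) - (y m ξ : X)‖ ≤ D * (a m n * ‖(ξ : X)‖) := by
    intro m
    induction m using Nat.strong_induction_on with
    | _ m ih =>
      intro hnm ξ
      set C := 2 * D + d * (1 / (1 - 2 * α)) with hC
      have hC0 : 0 ≤ C := by
        have h' : 0 ≤ d * (1 / (1 - 2 * α)) :=
          mul_nonneg hd0 (le_of_lt (one_div_pos.mpr h1α))
        rw [hC]
        linarith
      have hdiff : (x m ξ : X) - (y m ξ : X) =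
          ∑ k ∈ Finset.Ico n m,
            calA A m (k + 1) (P (k + 1)
              (f k ((x k ξ : X) + (φ k (x k ξ) : X)) -
               f k ((y k ξ : X) + (ψ k (y k ξ) : X)))) := by
        rw [hxeq m hnm ξ, hyeq m hnm ξ, add_sub_add_left_eq_sub,
          ← Finset.sum_sub_distrib]
        apply Finset.sum_congr rfl
        intro k hk
        rw [← map_sub (calA A m (k + 1)), ← map_sub (P (k + 1))]
      have hterm : ∀ k ∈ Finset.Ico n m,
          ‖calA A m (k + 1) (P (k + 1)
            (f k ((x k ξ : X) + (φ k (x k ξ) : X)) -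
             f k ((y k ξ : X) + (ψ k (y k ξ) : X))))‖ ≤
          a m (k + 1) * (a k n * L k) * (C * ‖(ξ : X)‖) := by
        intro k hk
        obtain ⟨hnk, hkm⟩ := Finset.mem_Ico.mp hk
        have hxyk := ih k hkm hnk ξ
        have hyk := hyN k hnk ξ
        have hUV : ‖((x k ξ : X) + (φ k (x k ξ) : X)) -
            ((y k ξ : X) + (ψ k (y k ξ) : X))‖ ≤
            2 * ‖(x k ξ : X) - (y k ξ : X)‖ + d * ‖(y k ξ : X)‖ := by
          have h1 : ((x k ξ : X) + (φ k (x k ξ) : X)) -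
              ((y k ξ : X) + (ψ k (y k ξ) : X)) =
              ((x k ξ : X) - (y k ξ : X)) +
              (((φ k (x k ξ) : X) - (φ k (y k ξ) : X)) +
               ((φ k (y k ξ) : X) - (ψ k (y k ξ) : X))) := by abel
          rw [h1]
          have h2 := norm_add_le ((x k ξ : X) - (y k ξ : X))
            (((φ k (x k ξ) : X) - (φ k (y k ξ) : X)) +
             ((φ k (y k ξ) : X) - (ψ k (y k ξ) : X)))
          have h3 := norm_add_le ((φ k (x k ξ) : X) - (φ k (y k ξ) : X))
            ((φ k (y k ξ) : X) - (ψ k (y k ξ) : X))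
          have h4 := hφL k (x k ξ) (y k ξ)
          have h5 := hdub k (y k ξ)
          linarith
        have hw : ‖f k ((x k ξ : X) + (φ k (x k ξ) : X)) -
            f k ((y k ξ : X) + (ψ k (y k ξ) : X))‖ ≤
            L k * (2 * (D * (a k n * ‖(ξ : X)‖)) +
              d * (1 / (1 - 2 * α) * (a k n * ‖(ξ : X)‖))) := by
          have h1 := hLip k ((x k ξ : X) + (φ k (x k ξ) : X))
            ((y k ξ : X) + (ψ k (y k ξ) : X))
          have h2 : ‖((x k ξ : X) + (φ k (x k ξ) : X)) -
              ((y k ξ : X) + (ψ k (y k ξ) : X))‖ ≤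
              2 * (D * (a k n * ‖(ξ : X)‖)) +
                d * (1 / (1 - 2 * α) * (a k n * ‖(ξ : X)‖)) := by
            have : d * ‖(y k ξ : X)‖ ≤ d * (1 / (1 - 2 * α) * (a k n * ‖(ξ : X)‖)) :=
              mul_le_mul_of_nonneg_left hyk hd0
            linarith
          calc ‖f k ((x k ξ : X) + (φ k (x k ξ) : X)) -
              f k ((y k ξ : X) + (ψ k (y k ξ) : X))‖ ≤
              L k * ‖((x k ξ : X) + (φ k (x k ξ) : X)) -
                ((y k ξ : X) + (ψ k (y k ξ) : X))‖ := h1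
            _ ≤ _ := mul_le_mul_of_nonneg_left h2 (hL0 k)
        have h6 := hAP m (k + 1) hkm
          (f k ((x k ξ : X) + (φ k (x k ξ) : X)) -
           f k ((y k ξ : X) + (ψ k (y k ξ) : X)))
        calc ‖calA A m (k + 1) (P (k + 1)
            (f k ((x k ξ : X) + (φ k (x k ξ) : X)) -
             f k ((y k ξ : X) + (ψ k (y k ξ) : X))))‖ ≤
            a m (k + 1) * ‖f k ((x k ξ : X) + (φ k (x k ξ) : X)) -
              f k ((y k ξ : X) + (ψ k (y k ξ) : X))‖ := h6
          _ ≤ a m (k + 1) * (L k * (2 * (D * (a k n * ‖(ξ : X)‖)) +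
              d * (1 / (1 - 2 * α) * (a k n * ‖(ξ : X)‖)))) :=
            mul_le_mul_of_nonneg_left hw (ha m (k + 1) hkm).le
          _ = a m (k + 1) * (a k n * L k) * (C * ‖(ξ : X)‖) := by
            rw [hC]
            ring
      have hαC : α * C = D := by
        rw [hC, hD]
        field_simp
        ring
      calc ‖(x m ξ : X) - (y m ξ : X)‖ =
          ‖∑ k ∈ Finset.Ico n m,
            calA A m (k + 1) (P (k + 1)
              (f k ((x k ξ : X) + (φ k (x k ξ) : X)) -
               f k ((y k ξ : X) + (ψ k (y k ξ) : X))))‖ := by rw [hdiff]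
        _ ≤ ∑ k ∈ Finset.Ico n m,
            ‖calA A m (k + 1) (P (k + 1)
              (f k ((x k ξ : X) + (φ k (x k ξ) : X)) -
               f k ((y k ξ : X) + (ψ k (y k ξ) : X))))‖ := norm_sum_le _ _
        _ ≤ ∑ k ∈ Finset.Ico n m,
            a m (k + 1) * (a k n * L k) * (C * ‖(ξ : X)‖) :=
          Finset.sum_le_sum hterm
        _ = (∑ k ∈ Finset.Ico n m, a m (k + 1) * (a k n * L k)) * (C * ‖(ξ : X)‖) := by
          rw [Finset.sum_mul]
        _ ≤ α * a m n * (C * ‖(ξ : X)‖) := by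
          apply mul_le_mul_of_nonneg_right (hsumle m hnm)
          positivity
        _ = D * (a m n * ‖(ξ : X)‖) := by rw [← hαC]; ring
  intro m hnm ξ
  have := main m hnm ξ
  have heq : D * (a m n * ‖(ξ : X)‖) =
      α / (1 - 2 * α) ^ 2 * d * (a m n * ‖(ξ : X)‖) := by
    rw [hD]; ring
  rw [heq] at this
  exact this
end

section
/- Suppose x_{m+1} = A_m x_m admits a general dichotomy with bounds (a_{m,n}) and (b_{m,n}), the f_m are Lipschitz with f_m(0)=0, α < +∞, β < +∞, and 2α + max{2β, √β} < 1. Then for every φ ∈ 𝒳, every n ∈ ℕ and every ξ ∈ E_n, the series Σ_{k=n}^{∞} ‖(𝒜_{k+1,n}|_{F_n})^{−1} Q_{k+1} f_k(x^φ_{n,k}(ξ) + φ_k(x^φ_{n,k}(ξ)))‖ converges and its sum is at most 2β ‖ξ‖ ‖x^φ‖_n. -/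
/-- The series in Lemma 3.2 converges absolutely, with sum of norms at most
`2 β ‖ξ‖ ‖x^φ‖_n`. -/
theorem series_abs_convergent
    {X : Type*} [NormedAddCommGroup X] [NormedSpace ℝ X] [CompleteSpace X]
    (A P : ℕ → X →L[ℝ] X) (B : ℕ → ℕ → X →L[ℝ] X) (a b : ℕ → ℕ → ℝ)
    -- the bounds are positive
    (ha : ∀ m n : ℕ, n ≤ m → 0 < a m n) (hb : ∀ m n : ℕ, n ≤ m → 0 < b m n)
    -- the `P n` are bounded projections
    (hproj : ∀ n, (P n).comp (P n) = P n)
    -- (S1) : `P m ∘ 𝒜_{m,n} = 𝒜_{m,n} ∘ P n`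
    (hS1 : ∀ m n : ℕ, n ≤ m → (P m).comp (calA A m n) = (calA A m n).comp (P n))
    -- (S2)/(S3) : `B m n` is the operator `(𝒜_{m,n}|_{F n})⁻¹ ∘ Q m`, where `Q m = Id - P m`;
    -- its existence encodes that `𝒜_{m,n}` maps `F n = ker (P n)` bijectively onto `F m`
    (hB1 : ∀ m n : ℕ, n ≤ m → ∀ x : X, calA A m n (B m n x) = x - P m x)
    (hB2 : ∀ m n : ℕ, n ≤ m → ∀ x : X, B m n (calA A m n x) = x - P n x)
    (hBF : ∀ m n : ℕ, n ≤ m → ∀ x : X, P n (B m n x) = 0)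
    -- (D1) : `‖𝒜_{m,n} P n‖ ≤ a m n`
    (hD1 : ∀ m n : ℕ, n ≤ m → ‖(calA A m n).comp (P n)‖ ≤ a m n)
    -- (D2) : `‖(𝒜_{m,n}|_{F n})⁻¹ Q m‖ ≤ b m n`
    (hD2 : ∀ m n : ℕ, n ≤ m → ‖B m n‖ ≤ b m n)
    -- the perturbations `f k` vanish at `0` and are Lipschitz with constant `L k`
    (f : ℕ → X → X) (L : ℕ → ℝ) (hL0 : ∀ k, 0 ≤ L k) (hf0 : ∀ k, f k 0 = 0)
    (hLip : ∀ (k : ℕ) (u v : X), ‖f k u - f k v‖ ≤ L k * ‖u - v‖)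
    -- `α = sup_{m>n} (1/a_{m,n}) ∑_{k=n}^{m-1} a_{m,k+1} a_{k,n} Lip(f k) < ∞`
    (α : ℝ)
    (hα : IsLUB {r : ℝ | ∃ m n : ℕ, n < m ∧
      r = (∑ k ∈ Finset.Ico n m, a m (k + 1) * (a k n * L k)) / a m n} α)
    -- `β = sup_n ∑_{k=n}^{∞} b_{k+1,n} a_{k,n} Lip(f k) < ∞`
    (β : ℝ)
    (hsum : ∀ n : ℕ, Summable fun j : ℕ => b (n + j + 1) n * (a (n + j) n * L (n + j)))
    (hβ : IsLUB {r : ℝ | ∃ n : ℕ,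
      r = ∑' j : ℕ, b (n + j + 1) n * (a (n + j) n * L (n + j))} β)
    -- `2α + max {2β, √β} < 1`
    (hcond : 2 * α + max (2 * β) (Real.sqrt β) < 1)
    (φ : ∀ n : ℕ, LinearMap.range (P n : X →ₗ[ℝ] X) → LinearMap.ker (P n : X →ₗ[ℝ] X))
    (hφ : ((∀ n, φ n 0 = 0) ∧
      ∀ (n : ℕ) (ξ ξ' : LinearMap.range (P n : X →ₗ[ℝ] X)),
        ‖(φ n ξ : X) - (φ n ξ' : X)‖ ≤ ‖(ξ : X) - (ξ' : X)‖))
    (n : ℕ) (x : ∀ m : ℕ, LinearMap.range (P n : X →ₗ[ℝ] X) → LinearMap.range (P m : X →ₗ[ℝ] X))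
    (hx : ((∀ m : ℕ, n ≤ m → x m 0 = 0) ∧
      (∃ C : ℝ, ∀ m : ℕ, n ≤ m → ∀ ξ : LinearMap.range (P n : X →ₗ[ℝ] X),
        ‖(x m ξ : X)‖ ≤ C * (a m n * ‖(ξ : X)‖)) ∧
      (∀ m : ℕ, n ≤ m → ∀ ξ : LinearMap.range (P n : X →ₗ[ℝ] X),
        (x m ξ : X) = calA A m n (ξ : X) +
          ∑ k ∈ Finset.Ico n m,
            calA A m (k + 1) (P (k + 1) (f k ((x k ξ : X) + (φ k (x k ξ) : X)))))))
    -- `N` is an upper bound for `‖x^φ‖_n`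
    (N : ℝ)
    (hN : ∀ m : ℕ, n ≤ m → ∀ ξ : LinearMap.range (P n : X →ₗ[ℝ] X),
      ‖(x m ξ : X)‖ ≤ N * (a m n * ‖(ξ : X)‖)) :
    ∀ ξ : LinearMap.range (P n : X →ₗ[ℝ] X),
      ∃ S : ℝ,
        HasSum
          (fun j : ℕ => ‖B (n + j + 1) n (f (n + j)
          ((x (n + j) ξ : X) + (φ (n + j) (x (n + j) ξ) : X)))‖)
          S ∧
        S ≤ 2 * β * (‖(ξ : X)‖ * N) := by
  intro ξ
  by_cases hξ : ξ = 0
  · refine ⟨0, ?_, ?_⟩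
    · have : (fun j : ℕ => ‖B (n + j + 1) n (f (n + j)
          ((x (n + j) ξ : X) + (φ (n + j) (x (n + j) ξ) : X)))‖) = fun _ => (0 : ℝ) := by
        funext j
        have hx0 : x (n + j) ξ = 0 := by rw [hξ]; exact hx.1 (n + j) (Nat.le_add_right n j)
        simp [hx0, hφ.1, hf0]
      rw [this]
      exact hasSum_zero
    · simp [hξ]
  · -- main case
    have hξpos : 0 < ‖(ξ : X)‖ := by
      rw [norm_pos_iff]
      exact fun h => hξ (Subtype.ext h)
    have hann : 0 < a n n := ha n n le_rfl
    have hNnn : 0 ≤ N := by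
      have h1 := (norm_nonneg ((x n ξ : X))).trans (hN n le_rfl ξ)
      nlinarith [mul_pos hann hξpos]
    set g : ℕ → ℝ := fun j : ℕ => ‖B (n + j + 1) n (f (n + j)
        ((x (n + j) ξ : X) + (φ (n + j) (x (n + j) ξ) : X)))‖ with hg
    set c : ℕ → ℝ := fun j : ℕ => b (n + j + 1) n * (a (n + j) n * L (n + j)) with hc
    have hdom : ∀ j : ℕ, g j ≤ (2 * N * ‖(ξ : X)‖) * c j := by
      intro j
      set k := n + j with hk
      have hnk : n ≤ k := Nat.le_add_right n j
      have hxb : ‖(x k ξ : X)‖ ≤ N * (a k n * ‖(ξ : X)‖) := hN k hnk ξ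
      have hφb : ‖(φ k (x k ξ) : X)‖ ≤ ‖(x k ξ : X)‖ := by
        have := hφ.2 k (x k ξ) 0
        simpa [hφ.1] using this
      have huv : ‖(x k ξ : X) + (φ k (x k ξ) : X)‖ ≤ 2 * (N * (a k n * ‖(ξ : X)‖)) := by
        calc ‖(x k ξ : X) + (φ k (x k ξ) : X)‖ ≤ ‖(x k ξ : X)‖ + ‖(φ k (x k ξ) : X)‖ :=
              norm_add_le _ _
          _ ≤ 2 * (N * (a k n * ‖(ξ : X)‖)) := by linarith
      have hfb : ‖f k ((x k ξ : X) + (φ k (x k ξ) : X))‖ ≤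
          L k * ‖(x k ξ : X) + (φ k (x k ξ) : X)‖ := by
        have := hLip k ((x k ξ : X) + (φ k (x k ξ) : X)) 0
        simpa [hf0] using this
      have hBb : g j ≤ b (k + 1) n * ‖f k ((x k ξ : X) + (φ k (x k ξ) : X))‖ := by
        calc g j ≤ ‖B (k + 1) n‖ * ‖f k ((x k ξ : X) + (φ k (x k ξ) : X))‖ :=
              (B (k + 1) n).le_opNorm _
          _ ≤ b (k + 1) n * ‖f k ((x k ξ : X) + (φ k (x k ξ) : X))‖ :=
              mul_le_mul_of_nonneg_right (hD2 (k + 1) n (hnk.trans (Nat.le_succ k)))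
                (norm_nonneg _)
      have hbpos : 0 < b (k + 1) n := hb (k + 1) n (hnk.trans (Nat.le_succ k))
      have hLk := hL0 k
      have : g j ≤ b (k + 1) n * (L k * (2 * (N * (a k n * ‖(ξ : X)‖)))) := by
        refine hBb.trans ?_
        refine mul_le_mul_of_nonneg_left ?_ hbpos.le
        exact hfb.trans (mul_le_mul_of_nonneg_left huv hLk)
      calc g j ≤ b (k + 1) n * (L k * (2 * (N * (a k n * ‖(ξ : X)‖)))) := this
        _ = (2 * N * ‖(ξ : X)‖) * c j := by simp only [hc, hk]; ring
    have hgnn : ∀ j, 0 ≤ g j := fun j => norm_nonneg _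
    have hdsum : Summable fun j => (2 * N * ‖(ξ : X)‖) * c j := (hsum n).mul_left _
    have hgsum : Summable g := Summable.of_nonneg_of_le hgnn hdom hdsum
    refine ⟨∑' j, g j, hgsum.hasSum, ?_⟩
    have h1 : (∑' j, g j) ≤ ∑' j, (2 * N * ‖(ξ : X)‖) * c j :=
      Summable.tsum_le_tsum hdom hgsum hdsum
    have h2 : (∑' j, (2 * N * ‖(ξ : X)‖) * c j) = (2 * N * ‖(ξ : X)‖) * ∑' j, c j :=
      tsum_mul_left
    have h3 : (∑' j, c j) ≤ β := hβ.1 ⟨n, rfl⟩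
    have hcoef : 0 ≤ 2 * N * ‖(ξ : X)‖ := by positivity
    calc (∑' j, g j) ≤ (2 * N * ‖(ξ : X)‖) * ∑' j, c j := by rw [← h2]; exact h1
      _ ≤ (2 * N * ‖(ξ : X)‖) * β := mul_le_mul_of_nonneg_left h3 hcoef
      _ = 2 * β * (‖(ξ : X)‖ * N) := by ring
end

section
/- Suppose x_{m+1} = A_m x_m admits a general dichotomy with bounds (a_{m,n}) and (b_{m,n}), the f_m are Lipschitz with f_m(0)=0, and α < +∞. Fix φ ∈ 𝒳 and n ∈ ℕ, and define the operator J on ℬ_n by (Jx)_n(ξ) = ξ and (Jx)_m(ξ) = 𝒜_{m,n}ξ + Σ_{k=n}^{m−1} 𝒜_{m,k+1} P_{k+1} f_k(x_k(ξ) + φ_k(x_k(ξ))) for m > n. Then for every x ∈ ℬ_n one has Jx ∈ ℬ_n with (Jx)_m(0) = 0 for all m ≥ n and ‖Jx‖_n ≤ 1 + 2α ‖x‖_n. -/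
/-- The operator `J` maps `ℬ_n` into itself, with `‖J x‖_n ≤ 1 + 2 α ‖x‖_n`. -/
theorem J_maps_B_into_B
    {X : Type*} [NormedAddCommGroup X] [NormedSpace ℝ X] [CompleteSpace X]
    (A P : ℕ → X →L[ℝ] X) (B : ℕ → ℕ → X →L[ℝ] X) (a b : ℕ → ℕ → ℝ)
    -- the bounds are positive
    (ha : ∀ m n : ℕ, n ≤ m → 0 < a m n) (hb : ∀ m n : ℕ, n ≤ m → 0 < b m n)
    -- the `P n` are bounded projections
    (hproj : ∀ n, (P n).comp (P n) = P n)
    -- (S1) : `P m ∘ 𝒜_{m,n} = 𝒜_{m,n} ∘ P n`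
    (hS1 : ∀ m n : ℕ, n ≤ m → (P m).comp (calA A m n) = (calA A m n).comp (P n))
    -- (S2)/(S3) : `B m n` is the operator `(𝒜_{m,n}|_{F n})⁻¹ ∘ Q m`, where `Q m = Id - P m`;
    -- its existence encodes that `𝒜_{m,n}` maps `F n = ker (P n)` bijectively onto `F m`
    (hB1 : ∀ m n : ℕ, n ≤ m → ∀ x : X, calA A m n (B m n x) = x - P m x)
    (hB2 : ∀ m n : ℕ, n ≤ m → ∀ x : X, B m n (calA A m n x) = x - P n x)
    (hBF : ∀ m n : ℕ, n ≤ m → ∀ x : X, P n (B m n x) = 0)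
    -- (D1) : `‖𝒜_{m,n} P n‖ ≤ a m n`
    (hD1 : ∀ m n : ℕ, n ≤ m → ‖(calA A m n).comp (P n)‖ ≤ a m n)
    -- (D2) : `‖(𝒜_{m,n}|_{F n})⁻¹ Q m‖ ≤ b m n`
    (hD2 : ∀ m n : ℕ, n ≤ m → ‖B m n‖ ≤ b m n)
    -- the perturbations `f k` vanish at `0` and are Lipschitz with constant `L k`
    (f : ℕ → X → X) (L : ℕ → ℝ) (hL0 : ∀ k, 0 ≤ L k) (hf0 : ∀ k, f k 0 = 0)
    (hLip : ∀ (k : ℕ) (u v : X), ‖f k u - f k v‖ ≤ L k * ‖u - v‖)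
    -- `α = sup_{m>n} (1/a_{m,n}) ∑_{k=n}^{m-1} a_{m,k+1} a_{k,n} Lip(f k) < ∞`
    (α : ℝ)
    (hα : IsLUB {r : ℝ | ∃ m n : ℕ, n < m ∧
      r = (∑ k ∈ Finset.Ico n m, a m (k + 1) * (a k n * L k)) / a m n} α)
    (φ : ∀ n : ℕ, LinearMap.range (P n : X →ₗ[ℝ] X) → LinearMap.ker (P n : X →ₗ[ℝ] X))
    (hφ : ((∀ n, φ n 0 = 0) ∧
      ∀ (n : ℕ) (ξ ξ' : LinearMap.range (P n : X →ₗ[ℝ] X)),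
        ‖(φ n ξ : X) - (φ n ξ' : X)‖ ≤ ‖(ξ : X) - (ξ' : X)‖))
    (n : ℕ) (x : ∀ m : ℕ, LinearMap.range (P n : X →ₗ[ℝ] X) → LinearMap.range (P m : X →ₗ[ℝ] X))
    -- `x ∈ ℬ_n`
    (hx0 : ∀ m : ℕ, n ≤ m → x m 0 = 0)
    (hxC : ∃ C : ℝ, ∀ m : ℕ, n ≤ m → ∀ ξ : LinearMap.range (P n : X →ₗ[ℝ] X),
      ‖(x m ξ : X)‖ ≤ C * (a m n * ‖(ξ : X)‖))
    -- `N` is an upper bound for `‖x‖_n`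
    (N : ℝ)
    (hN : ∀ m : ℕ, n ≤ m → ∀ ξ : LinearMap.range (P n : X →ₗ[ℝ] X),
      ‖(x m ξ : X)‖ ≤ N * (a m n * ‖(ξ : X)‖))
    -- `Jx` is the image of `x` under the operator `J = J_φ`
    (Jx : ∀ m : ℕ, LinearMap.range (P n : X →ₗ[ℝ] X) → LinearMap.range (P m : X →ₗ[ℝ] X))
    (hJ0 : ∀ ξ : LinearMap.range (P n : X →ₗ[ℝ] X), Jx n ξ = ξ)
    (hJ : ∀ m : ℕ, n < m → ∀ ξ : LinearMap.range (P n : X →ₗ[ℝ] X),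
      (Jx m ξ : X) = calA A m n (ξ : X) +
        ∑ k ∈ Finset.Ico n m,
          calA A m (k + 1) (P (k + 1) (f k ((x k ξ : X) + (φ k (x k ξ) : X)))))
    :
    (∀ m : ℕ, n ≤ m → Jx m 0 = 0) ∧
    (∀ m : ℕ, n ≤ m → ∀ ξ : LinearMap.range (P n : X →ₗ[ℝ] X),
      ‖(Jx m ξ : X)‖ ≤ (1 + 2 * α * N) * (a m n * ‖(ξ : X)‖)) := by
  obtain ⟨hφ0, hφL⟩ := hφ
  have hPfix : ∀ m (ξ : LinearMap.range (P m : X →ₗ[ℝ] X)), P m (ξ : X) = (ξ : X) := by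
    rintro m ⟨ξ, y, rfl⟩
    simpa using ContinuousLinearMap.ext_iff.mp (hproj m) y
  have hφnorm : ∀ k (u : LinearMap.range (P k : X →ₗ[ℝ] X)), ‖(φ k u : X)‖ ≤ ‖(u : X)‖ := by
    intro k u
    simpa [hφ0 k] using hφL k u 0
  have hcalA_id : ∀ k, calA A k k = ContinuousLinearMap.id ℝ X := by
    intro k
    cases k with
    | zero => rfl
    | succ k => simp [calA]
  -- part 1: Jx vanishes at 0
  have hzero : ∀ m : ℕ, n ≤ m → Jx m 0 = 0 := by
    intro m hm
    rcases eq_or_lt_of_le hm with rfl | hlt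
    · exact hJ0 0
    · apply Subtype.ext
      rw [show ((0 : LinearMap.range (P m : X →ₗ[ℝ] X)) : X) = 0 from rfl, hJ m hlt 0]
      have hterm0 : ∀ k ∈ Finset.Ico n m,
          calA A m (k+1) (P (k+1) (f k ((x k 0 : X) + (φ k (x k 0) : X)))) = 0 := by
        intro k hk
        have hkn : n ≤ k := (Finset.mem_Ico.mp hk).1
        rw [hx0 k hkn, hφ0 k]
        simp [hf0 k]
      rw [Finset.sum_congr rfl hterm0]
      simp
  refine ⟨hzero, ?_⟩
  have hα0 : 0 ≤ α := by
    have hmem : (∑ k ∈ Finset.Ico 0 1, a 1 (k + 1) * (a k 0 * L k)) / a 1 0 ∈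
        {r : ℝ | ∃ m n : ℕ, n < m ∧
          r = (∑ k ∈ Finset.Ico n m, a m (k + 1) * (a k n * L k)) / a m n} :=
      ⟨1, 0, Nat.zero_lt_one, rfl⟩
    refine le_trans ?_ (hα.1 hmem)
    have : (∑ k ∈ Finset.Ico 0 1, a 1 (k + 1) * (a k 0 * L k)) = a 1 1 * (a 0 0 * L 0) := by
      simp
    rw [this]
    exact div_nonneg (mul_nonneg (ha 1 1 le_rfl).le (mul_nonneg (ha 0 0 le_rfl).le (hL0 0)))
      (ha 1 0 (by norm_num)).le
  intro m hm ξ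
  by_cases hξ0 : (ξ : X) = 0
  · have : ξ = 0 := Subtype.ext hξ0
    subst this
    rw [hzero m hm]
    simp
  · have hξpos : 0 < ‖(ξ : X)‖ := norm_pos_iff.mpr hξ0
    have hNpos : 0 ≤ N := by
      have h := hN n le_rfl ξ
      have h0 := norm_nonneg (x n ξ : X)
      have hann := ha n n le_rfl
      nlinarith [mul_pos hann hξpos]
    -- bound on the linear part
    have hlin : ∀ m' : ℕ, n ≤ m' → ‖calA A m' n (ξ : X)‖ ≤ a m' n * ‖(ξ : X)‖ := by
      intro m' hm'
      have h1 : calA A m' n (ξ : X) = ((calA A m' n).comp (P n)) (ξ : X) := by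
        simp [hPfix n ξ]
      rw [h1]
      calc ‖((calA A m' n).comp (P n)) (ξ : X)‖
          ≤ ‖(calA A m' n).comp (P n)‖ * ‖(ξ : X)‖ := ContinuousLinearMap.le_opNorm _ _
        _ ≤ a m' n * ‖(ξ : X)‖ :=
            mul_le_mul_of_nonneg_right (hD1 m' n hm') (norm_nonneg _)
    rcases eq_or_lt_of_le hm with rfl | hmn
    · -- m = n
      rw [hJ0 ξ]
      have h1 : ‖(ξ : X)‖ ≤ a n n * ‖(ξ : X)‖ := by
        have := hlin n le_rfl
        rw [hcalA_id n] at this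
        simpa using this
      have h2 : 0 ≤ 2 * α * N * (a n n * ‖(ξ : X)‖) :=
        mul_nonneg (mul_nonneg (mul_nonneg (by norm_num) hα0) hNpos)
          (mul_nonneg (ha n n le_rfl).le (norm_nonneg _))
      nlinarith
    · -- m > n
      rw [hJ m hmn ξ]
      have hterm : ∀ k ∈ Finset.Ico n m,
          ‖calA A m (k+1) (P (k+1) (f k ((x k ξ : X) + (φ k (x k ξ) : X))))‖
          ≤ a m (k+1) * (a k n * L k) * (2 * N * ‖(ξ : X)‖) := by
        intro k hk
        obtain ⟨hkn, hkm⟩ := Finset.mem_Ico.mp hk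
        set u : X := (x k ξ : X) + (φ k (x k ξ) : X) with hu
        have ham : (0:ℝ) ≤ a m (k+1) := (ha m (k+1) hkm).le
        have h1 : ‖calA A m (k+1) (P (k+1) (f k u))‖ ≤ a m (k+1) * ‖f k u‖ := by
          calc ‖calA A m (k+1) (P (k+1) (f k u))‖
              = ‖((calA A m (k+1)).comp (P (k+1))) (f k u)‖ := rfl
            _ ≤ ‖(calA A m (k+1)).comp (P (k+1))‖ * ‖f k u‖ :=
                ContinuousLinearMap.le_opNorm _ _
            _ ≤ a m (k+1) * ‖f k u‖ :=
                mul_le_mul_of_nonneg_right (hD1 m (k+1) hkm) (norm_nonneg _)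
        have h2 : ‖f k u‖ ≤ L k * ‖u‖ := by
          simpa [hf0 k] using hLip k u 0
        have h3 : ‖u‖ ≤ 2 * ‖(x k ξ : X)‖ := by
          calc ‖u‖ ≤ ‖(x k ξ : X)‖ + ‖(φ k (x k ξ) : X)‖ := norm_add_le _ _
            _ ≤ ‖(x k ξ : X)‖ + ‖(x k ξ : X)‖ := by linarith [hφnorm k (x k ξ)]
            _ = 2 * ‖(x k ξ : X)‖ := by ring
        have h4 : ‖(x k ξ : X)‖ ≤ N * (a k n * ‖(ξ : X)‖) := hN k hkn ξ
        calc ‖calA A m (k+1) (P (k+1) (f k u))‖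
            ≤ a m (k+1) * ‖f k u‖ := h1
          _ ≤ a m (k+1) * (L k * ‖u‖) := mul_le_mul_of_nonneg_left h2 ham
          _ ≤ a m (k+1) * (L k * (2 * ‖(x k ξ : X)‖)) :=
              mul_le_mul_of_nonneg_left (mul_le_mul_of_nonneg_left h3 (hL0 k)) ham
          _ ≤ a m (k+1) * (L k * (2 * (N * (a k n * ‖(ξ : X)‖)))) :=
              mul_le_mul_of_nonneg_left (mul_le_mul_of_nonneg_left
                (mul_le_mul_of_nonneg_left h4 (by norm_num)) (hL0 k)) ham
          _ = a m (k+1) * (a k n * L k) * (2 * N * ‖(ξ : X)‖) := by ring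
      have hS : (∑ k ∈ Finset.Ico n m, a m (k+1) * (a k n * L k)) ≤ α * a m n := by
        have hmem : (∑ k ∈ Finset.Ico n m, a m (k + 1) * (a k n * L k)) / a m n ∈
            {r : ℝ | ∃ m n : ℕ, n < m ∧
              r = (∑ k ∈ Finset.Ico n m, a m (k + 1) * (a k n * L k)) / a m n} :=
          ⟨m, n, hmn, rfl⟩
        exact (div_le_iff₀ (ha m n hm)).mp (hα.1 hmem)
      have hsum : ‖∑ k ∈ Finset.Ico n m,
            calA A m (k+1) (P (k+1) (f k ((x k ξ : X) + (φ k (x k ξ) : X))))‖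
          ≤ α * a m n * (2 * N * ‖(ξ : X)‖) := by
        calc ‖∑ k ∈ Finset.Ico n m,
              calA A m (k+1) (P (k+1) (f k ((x k ξ : X) + (φ k (x k ξ) : X))))‖
            ≤ ∑ k ∈ Finset.Ico n m,
              ‖calA A m (k+1) (P (k+1) (f k ((x k ξ : X) + (φ k (x k ξ) : X))))‖ :=
              norm_sum_le _ _
          _ ≤ ∑ k ∈ Finset.Ico n m, a m (k+1) * (a k n * L k) * (2 * N * ‖(ξ : X)‖) :=
              Finset.sum_le_sum hterm
          _ = (∑ k ∈ Finset.Ico n m, a m (k+1) * (a k n * L k)) * (2 * N * ‖(ξ : X)‖) := by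
              rw [Finset.sum_mul]
          _ ≤ α * a m n * (2 * N * ‖(ξ : X)‖) :=
              mul_le_mul_of_nonneg_right hS
                (mul_nonneg (mul_nonneg (by norm_num) hNpos) (norm_nonneg _))
      calc ‖calA A m n (ξ : X) + ∑ k ∈ Finset.Ico n m,
              calA A m (k+1) (P (k+1) (f k ((x k ξ : X) + (φ k (x k ξ) : X))))‖
          ≤ ‖calA A m n (ξ : X)‖ + ‖∑ k ∈ Finset.Ico n m,
              calA A m (k+1) (P (k+1) (f k ((x k ξ : X) + (φ k (x k ξ) : X))))‖ :=
            norm_add_le _ _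
        _ ≤ a m n * ‖(ξ : X)‖ + α * a m n * (2 * N * ‖(ξ : X)‖) :=
            add_le_add (hlin m hm) hsum
        _ = (1 + 2 * α * N) * (a m n * ‖(ξ : X)‖) := by ring
end

section
/- Suppose x_{m+1} = A_m x_m admits a general dichotomy with bounds (a_{m,n}) and (b_{m,n}), the f_m are Lipschitz with f_m(0)=0, and α < +∞. Fix φ ∈ 𝒳 and n ∈ ℕ, and define the operator J on ℬ_n by (Jx)_n(ξ) = ξ and (Jx)_m(ξ) = 𝒜_{m,n}ξ + Σ_{k=n}^{m−1} 𝒜_{m,k+1} P_{k+1} f_k(x_k(ξ) + φ_k(x_k(ξ))) for m > n. Then for all x, y ∈ ℬ_n one has ‖Jx − Jy‖_n ≤ 2α ‖x − y‖_n; in particular, if α < 1/2 then J is a contraction on ℬ_n. -/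
/-- The operator `J` satisfies `‖J x - J y‖_n ≤ 2 α ‖x - y‖_n`; in particular it is a
contraction on `ℬ_n` when `α < 1/2`. -/
theorem J_contraction
    {X : Type*} [NormedAddCommGroup X] [NormedSpace ℝ X] [CompleteSpace X]
    (A P : ℕ → X →L[ℝ] X) (B : ℕ → ℕ → X →L[ℝ] X) (a b : ℕ → ℕ → ℝ)
    -- the bounds are positive
    (ha : ∀ m n : ℕ, n ≤ m → 0 < a m n) (hb : ∀ m n : ℕ, n ≤ m → 0 < b m n)
    -- the `P n` are bounded projections
    (hproj : ∀ n, (P n).comp (P n) = P n)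
    -- (S1) : `P m ∘ 𝒜_{m,n} = 𝒜_{m,n} ∘ P n`
    (hS1 : ∀ m n : ℕ, n ≤ m → (P m).comp (calA A m n) = (calA A m n).comp (P n))
    -- (S2)/(S3) : `B m n` is the operator `(𝒜_{m,n}|_{F n})⁻¹ ∘ Q m`, where `Q m = Id - P m`;
    -- its existence encodes that `𝒜_{m,n}` maps `F n = ker (P n)` bijectively onto `F m`
    (hB1 : ∀ m n : ℕ, n ≤ m → ∀ x : X, calA A m n (B m n x) = x - P m x)
    (hB2 : ∀ m n : ℕ, n ≤ m → ∀ x : X, B m n (calA A m n x) = x - P n x)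
    (hBF : ∀ m n : ℕ, n ≤ m → ∀ x : X, P n (B m n x) = 0)
    -- (D1) : `‖𝒜_{m,n} P n‖ ≤ a m n`
    (hD1 : ∀ m n : ℕ, n ≤ m → ‖(calA A m n).comp (P n)‖ ≤ a m n)
    -- (D2) : `‖(𝒜_{m,n}|_{F n})⁻¹ Q m‖ ≤ b m n`
    (hD2 : ∀ m n : ℕ, n ≤ m → ‖B m n‖ ≤ b m n)
    -- the perturbations `f k` vanish at `0` and are Lipschitz with constant `L k`
    (f : ℕ → X → X) (L : ℕ → ℝ) (hL0 : ∀ k, 0 ≤ L k) (hf0 : ∀ k, f k 0 = 0)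
    (hLip : ∀ (k : ℕ) (u v : X), ‖f k u - f k v‖ ≤ L k * ‖u - v‖)
    -- `α = sup_{m>n} (1/a_{m,n}) ∑_{k=n}^{m-1} a_{m,k+1} a_{k,n} Lip(f k) < ∞`
    (α : ℝ)
    (hα : IsLUB {r : ℝ | ∃ m n : ℕ, n < m ∧
      r = (∑ k ∈ Finset.Ico n m, a m (k + 1) * (a k n * L k)) / a m n} α)
    (φ : ∀ n : ℕ, LinearMap.range (P n : X →ₗ[ℝ] X) → LinearMap.ker (P n : X →ₗ[ℝ] X))
    (hφ : ((∀ n, φ n 0 = 0) ∧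
      ∀ (n : ℕ) (ξ ξ' : LinearMap.range (P n : X →ₗ[ℝ] X)),
        ‖(φ n ξ : X) - (φ n ξ' : X)‖ ≤ ‖(ξ : X) - (ξ' : X)‖))
    (n : ℕ) (x : ∀ m : ℕ, LinearMap.range (P n : X →ₗ[ℝ] X) → LinearMap.range (P m : X →ₗ[ℝ] X))
    -- `x ∈ ℬ_n`
    (hx0 : ∀ m : ℕ, n ≤ m → x m 0 = 0)
    (hxC : ∃ C : ℝ, ∀ m : ℕ, n ≤ m → ∀ ξ : LinearMap.range (P n : X →ₗ[ℝ] X),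
      ‖(x m ξ : X)‖ ≤ C * (a m n * ‖(ξ : X)‖))
    (y : ∀ m : ℕ, LinearMap.range (P n : X →ₗ[ℝ] X) → LinearMap.range (P m : X →ₗ[ℝ] X))
    (hy0 : ∀ m : ℕ, n ≤ m → y m 0 = 0)
    (hyC : ∃ C : ℝ, ∀ m : ℕ, n ≤ m → ∀ ξ : LinearMap.range (P n : X →ₗ[ℝ] X),
      ‖(y m ξ : X)‖ ≤ C * (a m n * ‖(ξ : X)‖))
    -- `M` is an upper bound for `‖x - y‖_n`
    (M : ℝ)
    (hM : ∀ m : ℕ, n ≤ m → ∀ ξ : LinearMap.range (P n : X →ₗ[ℝ] X),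
      ‖(x m ξ : X) - (y m ξ : X)‖ ≤ M * (a m n * ‖(ξ : X)‖))
    (Jx Jy : ∀ m : ℕ, LinearMap.range (P n : X →ₗ[ℝ] X) → LinearMap.range (P m : X →ₗ[ℝ] X))
    (hJ0 : ∀ ξ : LinearMap.range (P n : X →ₗ[ℝ] X), Jx n ξ = ξ)
    (hJ : ∀ m : ℕ, n < m → ∀ ξ : LinearMap.range (P n : X →ₗ[ℝ] X),
      (Jx m ξ : X) = calA A m n (ξ : X) +
        ∑ k ∈ Finset.Ico n m,
          calA A m (k + 1) (P (k + 1) (f k ((x k ξ : X) + (φ k (x k ξ) : X)))))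
    (hJy0 : ∀ ξ : LinearMap.range (P n : X →ₗ[ℝ] X), Jy n ξ = ξ)
    (hJy : ∀ m : ℕ, n < m → ∀ ξ : LinearMap.range (P n : X →ₗ[ℝ] X),
      (Jy m ξ : X) = calA A m n (ξ : X) +
        ∑ k ∈ Finset.Ico n m,
          calA A m (k + 1) (P (k + 1) (f k ((y k ξ : X) + (φ k (y k ξ) : X)))))
    :
    ∀ m : ℕ, n ≤ m → ∀ ξ : LinearMap.range (P n : X →ₗ[ℝ] X),
      ‖(Jx m ξ : X) - (Jy m ξ : X)‖ ≤ 2 * α * M * (a m n * ‖(ξ : X)‖) := by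
  -- α is nonnegative
  have hα0 : 0 ≤ α := by
    have hmem : (∑ k ∈ Finset.Ico 0 1, a 1 (k + 1) * (a k 0 * L k)) / a 1 0 ∈
        {r : ℝ | ∃ m n : ℕ, n < m ∧
          r = (∑ k ∈ Finset.Ico n m, a m (k + 1) * (a k n * L k)) / a m n} :=
      ⟨1, 0, one_pos, rfl⟩
    refine le_trans ?_ (hα.1 hmem)
    apply div_nonneg _ (le_of_lt (ha 1 0 (by norm_num)))
    refine Finset.sum_nonneg fun k _ => ?_
    rcases Finset.mem_Ico.mp ‹k ∈ Finset.Ico 0 1› with ⟨_, hk1⟩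
    interval_cases k
    exact mul_nonneg (le_of_lt (ha 1 1 le_rfl)) (mul_nonneg (le_of_lt (ha 0 0 le_rfl)) (hL0 0))
  intro m hm ξ
  by_cases hξ : ξ = 0
  · -- the zero case: everything vanishes
    subst hξ
    rcases eq_or_lt_of_le hm with rfl | hlt
    · rw [hJ0, hJy0]; simp
    · rw [hJ m hlt 0, hJy m hlt 0]
      have hsum : ∀ k ∈ Finset.Ico n m,
          calA A m (k + 1) (P (k + 1) (f k ((x k 0 : X) + (φ k (x k 0) : X)))) =
          calA A m (k + 1) (P (k + 1) (f k ((y k 0 : X) + (φ k (y k 0) : X)))) := by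
        intro k hk
        rcases Finset.mem_Ico.mp hk with ⟨hnk, _⟩
        rw [hx0 k hnk, hy0 k hnk]
      rw [Finset.sum_congr rfl hsum]
      simp
  · have hξn : 0 < ‖(ξ : X)‖ := by
      rw [norm_pos_iff]
      exact fun h => hξ (Subtype.ext h)
    have hM0 : 0 ≤ M := by
      have h := hM n le_rfl ξ
      have hpos : 0 < a n n * ‖(ξ : X)‖ := mul_pos (ha n n le_rfl) hξn
      nlinarith [norm_nonneg ((x n ξ : X) - (y n ξ : X))]
    rcases eq_or_lt_of_le hm with rfl | hlt
    · rw [hJ0, hJy0]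
      simp only [sub_self, norm_zero]
      have := mul_pos (ha n n le_rfl) hξn
      have h2 : (0:ℝ) ≤ 2 * α * M := by positivity
      positivity
    · rw [hJ m hlt ξ, hJy m hlt ξ]
      have key : (calA A m n (ξ : X) +
            ∑ k ∈ Finset.Ico n m,
              calA A m (k + 1) (P (k + 1) (f k ((x k ξ : X) + (φ k (x k ξ) : X))))) -
          (calA A m n (ξ : X) +
            ∑ k ∈ Finset.Ico n m,
              calA A m (k + 1) (P (k + 1) (f k ((y k ξ : X) + (φ k (y k ξ) : X))))) =
          ∑ k ∈ Finset.Ico n m,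
            ((calA A m (k + 1)).comp (P (k + 1)))
              (f k ((x k ξ : X) + (φ k (x k ξ) : X)) -
               f k ((y k ξ : X) + (φ k (y k ξ) : X))) := by
        rw [add_sub_add_left_eq_sub, ← Finset.sum_sub_distrib]
        refine Finset.sum_congr rfl fun k _ => ?_
        simp [ContinuousLinearMap.comp_apply, map_sub]
      rw [key]
      have hterm : ∀ k ∈ Finset.Ico n m,
          ‖((calA A m (k + 1)).comp (P (k + 1)))
              (f k ((x k ξ : X) + (φ k (x k ξ) : X)) -
               f k ((y k ξ : X) + (φ k (y k ξ) : X)))‖ ≤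
          2 * M * ‖(ξ : X)‖ * (a m (k + 1) * (a k n * L k)) := by
        intro k hk
        rcases Finset.mem_Ico.mp hk with ⟨hnk, hkm⟩
        set u : X := (x k ξ : X) + (φ k (x k ξ) : X) with hu
        set v : X := (y k ξ : X) + (φ k (y k ξ) : X) with hv
        have huv : ‖u - v‖ ≤ 2 * (M * (a k n * ‖(ξ : X)‖)) := by
          have h1 : u - v = ((x k ξ : X) - (y k ξ : X)) +
              ((φ k (x k ξ) : X) - (φ k (y k ξ) : X)) := by
            rw [hu, hv]; abel
          rw [h1]
          refine (norm_add_le _ _).trans ?_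
          have h2 := hφ.2 k (x k ξ) (y k ξ)
          have h3 := hM k hnk ξ
          linarith
        have hfw : ‖f k u - f k v‖ ≤ L k * (2 * (M * (a k n * ‖(ξ : X)‖))) :=
          (hLip k u v).trans (mul_le_mul_of_nonneg_left huv (hL0 k))
        calc ‖((calA A m (k + 1)).comp (P (k + 1))) (f k u - f k v)‖
            ≤ ‖(calA A m (k + 1)).comp (P (k + 1))‖ * ‖f k u - f k v‖ :=
              ContinuousLinearMap.le_opNorm _ _
          _ ≤ a m (k + 1) * ‖f k u - f k v‖ :=
              mul_le_mul_of_nonneg_right (hD1 m (k + 1) hkm) (norm_nonneg _)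
          _ ≤ a m (k + 1) * (L k * (2 * (M * (a k n * ‖(ξ : X)‖)))) :=
              mul_le_mul_of_nonneg_left hfw (le_of_lt (ha m (k + 1) hkm))
          _ = 2 * M * ‖(ξ : X)‖ * (a m (k + 1) * (a k n * L k)) := by ring
      have hsum : ‖∑ k ∈ Finset.Ico n m,
          ((calA A m (k + 1)).comp (P (k + 1)))
            (f k ((x k ξ : X) + (φ k (x k ξ) : X)) -
             f k ((y k ξ : X) + (φ k (y k ξ) : X)))‖ ≤
          ∑ k ∈ Finset.Ico n m, 2 * M * ‖(ξ : X)‖ * (a m (k + 1) * (a k n * L k)) :=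
        (norm_sum_le _ _).trans (Finset.sum_le_sum hterm)
      have hS : (∑ k ∈ Finset.Ico n m, a m (k + 1) * (a k n * L k)) ≤ α * a m n := by
        have hmem : (∑ k ∈ Finset.Ico n m, a m (k + 1) * (a k n * L k)) / a m n ∈
            {r : ℝ | ∃ m n : ℕ, n < m ∧
              r = (∑ k ∈ Finset.Ico n m, a m (k + 1) * (a k n * L k)) / a m n} :=
          ⟨m, n, hlt, rfl⟩
        exact (div_le_iff₀ (ha m n hm)).mp (hα.1 hmem)
      calc ‖∑ k ∈ Finset.Ico n m,
          ((calA A m (k + 1)).comp (P (k + 1)))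
            (f k ((x k ξ : X) + (φ k (x k ξ) : X)) -
             f k ((y k ξ : X) + (φ k (y k ξ) : X)))‖
          ≤ ∑ k ∈ Finset.Ico n m, 2 * M * ‖(ξ : X)‖ * (a m (k + 1) * (a k n * L k)) := hsum
        _ = 2 * M * ‖(ξ : X)‖ * ∑ k ∈ Finset.Ico n m, a m (k + 1) * (a k n * L k) := by
            rw [Finset.mul_sum]
        _ ≤ 2 * M * ‖(ξ : X)‖ * (α * a m n) := by
            apply mul_le_mul_of_nonneg_left hS
            positivity
        _ = 2 * α * M * (a m n * ‖(ξ : X)‖) := by ring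
end
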